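/- arXiv:2510.13340 — 5 statements merged into one kernel-verified Lean document; each statement's English description precedes it below -/
import Mathlib

section
/- Let c ∈ ℝ and φ ∈ X_{M,m} with M > |c| and m ≥ 2. Then M⁻¹_c[φ](x) = (1/(2π)) x^{−c} F[z ↦ φ(c+iz)](log x) for all x > 0, where F[f](ξ) = ∫_{−∞}^∞ e^{−ixξ} f(x) dx. Moreover, for every M′ ∈ (0,M) there exists C > 0 such that |M⁻¹_c[φ](x)| ≤ C x^{M′ − 2|c|} for all x ∈ (0,1] and |M⁻¹_c[φ](x)| ≤ C x^{−M′ + 2|c|} for all x ∈ [1,∞). In addition, for every k ∈ ℕ with k + 2 ≤ m and every M′ ∈ (0,M) there exists C > 0 such that the k-th derivative satisfies |(M⁻¹_c[φ])^{(k)}(x)| ≤ C x^{M′ − k − 2|c|} for all x ∈ (0,1] and |(M⁻¹_c[φ])^{(k)}(x)| ≤ C x^{−M′ − k + 2|c|} for all x ∈ [1,∞). -/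
/-!
STATEMENT 6: properties of the c-inverse Mellin transform of φ ∈ X_{M,m}
(Fourier representation, and decay of the transform and of its derivatives).
-/

open MeasureTheory

/-- membership in `X_{M,m}` : holomorphic on the strip `S_M = {|Re z| < M}` with decay
`|φ(z)| ≤ C (1+|z|)^{-m}` there. -/
def memX (M m : ℝ) (φ : ℂ → ℂ) : Prop :=
  DifferentiableOn ℂ φ {z : ℂ | |z.re| < M} ∧
  ∃ C > 0, ∀ z : ℂ, |z.re| < M → ‖φ z‖ ≤ C * (1 + ‖z‖) ^ (-m)

/-- the `c`-inverse Mellin transform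
`M⁻¹_c[φ](x) = (1/(2π)) ∫_ℝ x^{−c−iz} φ(c+iz) dz`. -/
noncomputable def mellinInvC (c : ℝ) (φ : ℂ → ℂ) (x : ℝ) : ℂ :=
  (1 / (2 * (Real.pi : ℂ))) *
    ∫ z : ℝ, (x : ℂ) ^ (-(c : ℂ) - Complex.I * z) * φ (c + Complex.I * z)

/-- the Fourier transform `F[f](ξ) = ∫_ℝ e^{−ixξ} f(x) dx`. -/
noncomputable def fourierT (f : ℝ → ℂ) (ξ : ℝ) : ℂ :=
  ∫ x : ℝ, Complex.exp (-Complex.I * x * ξ) * f x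

namespace MellinAux

open Complex Set Filter Topology Metric


lemma rpow_le_sum_endpoints {a b t r : ℝ} (ha : 0 < a) (hat : a ≤ t) (htb : t ≤ b) :
    t ^ r ≤ a ^ r + b ^ r := by
  rcases le_or_gt r 0 with hr | hr
  · have h1 := Real.rpow_le_rpow_of_nonpos ha hat hr
    have h2 : (0:ℝ) ≤ b ^ r := Real.rpow_nonneg (by linarith) r
    linarith
  · have h1 := Real.rpow_le_rpow (by linarith : (0:ℝ) ≤ t) htb hr.le
    have h2 : (0:ℝ) ≤ a ^ r := Real.rpow_nonneg ha.le r
    linarith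

lemma decay_le {m : ℝ} (hm : 2 ≤ m) {u : ℝ} (hu : 0 ≤ u) :
    (1 + u) ^ (-m) ≤ (1 + u ^ 2)⁻¹ := by
  have h1 : (1:ℝ) ≤ 1 + u := by linarith
  calc (1+u)^(-m) ≤ (1+u)^(-(2:ℝ)) :=
        Real.rpow_le_rpow_of_exponent_le h1 (by linarith)
    _ = ((1+u)^2)⁻¹ := by
        rw [Real.rpow_neg (by linarith), show ((2:ℝ))=(2:ℕ) by norm_num,
          Real.rpow_natCast]
    _ ≤ (1+u^2)⁻¹ := by
        apply inv_anti₀ (by positivity)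
        nlinarith

lemma integrable_decay {p : ℝ} (hp : 2 ≤ p) :
    Integrable (fun z : ℝ => (1 + |z|) ^ (-p)) := by
  refine Integrable.mono' integrable_inv_one_add_sq ?_ ?_
  · apply Continuous.aestronglyMeasurable
    apply Continuous.rpow_const (by continuity)
    intro x; left; positivity
  · filter_upwards with z
    rw [Real.norm_eq_abs, _root_.abs_of_nonneg (Real.rpow_nonneg (by positivity) _)]
    simpa [sq_abs] using decay_le hp (abs_nonneg z)

lemma rpow_exp_le_sum {x u₁ u₂ u : ℝ} (hx : 0 < x) (h1 : u₁ ≤ u) (h2 : u ≤ u₂) :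
    x ^ u ≤ x ^ u₁ + x ^ u₂ := by
  rcases le_total x 1 with h | h
  · have := Real.rpow_le_rpow_of_exponent_ge hx h h1
    have h2' := Real.rpow_nonneg hx.le u₂
    linarith
  · have := Real.rpow_le_rpow_of_exponent_le h h2
    have h1' := Real.rpow_nonneg hx.le u₁
    linarith

section
variable {M m : ℝ} {φ : ℂ → ℂ} {C₀ : ℝ}

lemma strip_open : IsOpen {z : ℂ | |z.re| < M} :=
  isOpen_lt (continuous_abs.comp Complex.continuous_re) continuous_const

lemma mem_strip {σ : ℝ} (hσ : |σ| < M) (z : ℝ) :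
    (↑σ + Complex.I * z : ℂ) ∈ {z : ℂ | |z.re| < M} := by
  simp [hσ]

lemma strip_cont (hd : DifferentiableOn ℂ φ {z : ℂ | |z.re| < M}) {σ : ℝ} (hσ : |σ| < M) :
    Continuous fun z : ℝ => φ (σ + Complex.I * z) := by
  refine ContinuousOn.comp_continuous (hd.continuousOn) (by continuity) (mem_strip hσ)

lemma norm_integrand_le
    (hC : ∀ z : ℂ, |z.re| < M → ‖φ z‖ ≤ C₀ * (1 + ‖z‖) ^ (-m))
    (hC₀ : 0 ≤ C₀) (hm : 0 ≤ m) {σ x : ℝ} (hσ : |σ| < M) (hx : 0 < x) (z : ℝ) :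
    ‖(x : ℂ) ^ (-(σ:ℂ) - Complex.I * z) * φ (σ + Complex.I * z)‖ ≤
      x ^ (-σ) * C₀ * (1 + |z|) ^ (-m) := by
  rw [norm_mul]
  have h1 : ‖(x:ℂ) ^ (-(σ:ℂ) - Complex.I * z)‖ = x ^ (-σ) := by
    rw [Complex.norm_cpow_eq_rpow_re_of_pos hx]
    norm_num
  have h2 : ‖φ (σ + Complex.I * z)‖ ≤ C₀ * (1 + |z|) ^ (-m) := by
    refine (hC _ (mem_strip hσ z)).trans ?_
    have hz : 1 + |z| ≤ 1 + ‖(σ + Complex.I * z)‖ := by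
      have := Complex.abs_im_le_norm (σ + Complex.I * z)
      simp only [Complex.add_im, Complex.ofReal_im, Complex.mul_im, Complex.I_re,
        Complex.I_im, Complex.ofReal_re, Complex.ofReal_im] at this
      simp only [zero_add, one_mul, zero_mul, mul_zero] at this ⊢
      linarith [this]
    exact mul_le_mul_of_nonneg_left
      (Real.rpow_le_rpow_of_nonpos (by positivity) hz (by linarith)) hC₀
  rw [h1, mul_assoc]
  exact mul_le_mul_of_nonneg_left h2 (Real.rpow_nonneg hx.le _)

lemma integrand_integrable (hd : DifferentiableOn ℂ φ {z : ℂ | |z.re| < M})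
    (hC : ∀ z : ℂ, |z.re| < M → ‖φ z‖ ≤ C₀ * (1 + ‖z‖) ^ (-m))
    (hC₀ : 0 ≤ C₀) (hm : 2 ≤ m) {σ x : ℝ} (hσ : |σ| < M) (hx : 0 < x) :
    Integrable (fun z : ℝ => (x : ℂ) ^ (-(σ:ℂ) - Complex.I * z) * φ (σ + Complex.I * z)) := by
  refine Integrable.mono' (((integrable_decay hm).const_mul (x ^ (-σ) * C₀))) ?_ ?_
  · apply Continuous.aestronglyMeasurable
    exact (Continuous.const_cpow (by continuity) (.inl (by exact_mod_cast hx.ne'))).mul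
      (strip_cont hd hσ)
  · filter_upwards with z
    exact norm_integrand_le hC hC₀ (by linarith) hσ hx z

lemma vint_norm_le (hd : DifferentiableOn ℂ φ {z : ℂ | |z.re| < M})
    (hC : ∀ z : ℂ, |z.re| < M → ‖φ z‖ ≤ C₀ * (1 + ‖z‖) ^ (-m))
    (hC₀ : 0 ≤ C₀) (hm : 2 ≤ m) {σ x : ℝ} (hσ : |σ| < M) (hx : 0 < x) :
    ‖∫ z : ℝ, (x : ℂ) ^ (-(σ:ℂ) - Complex.I * z) * φ (σ + Complex.I * z)‖ ≤
      x ^ (-σ) * C₀ * ∫ z : ℝ, (1 + |z|) ^ (-m) := by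
  have h := norm_integral_le_of_norm_le
    (((integrable_decay hm).const_mul (x ^ (-σ) * C₀)))
    (Filter.Eventually.of_forall fun z =>
      norm_integrand_le hC hC₀ (by linarith) hσ hx z)
  rwa [integral_const_mul] at h


lemma vint_shift (hd : DifferentiableOn ℂ φ {z : ℂ | |z.re| < M})
    (hC : ∀ z : ℂ, |z.re| < M → ‖φ z‖ ≤ C₀ * (1 + ‖z‖) ^ (-m))
    (hC₀ : 0 ≤ C₀) (hm : 2 ≤ m) {σ₁ σ₂ x : ℝ} (h1 : |σ₁| < M) (h2 : |σ₂| < M) (hx : 0 < x) :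
    (∫ z : ℝ, (x:ℂ) ^ (-(σ₁:ℂ) - Complex.I * z) * φ (σ₁ + Complex.I * z)) =
    ∫ z : ℝ, (x:ℂ) ^ (-(σ₂:ℂ) - Complex.I * z) * φ (σ₂ + Complex.I * z) := by
  set f : ℂ → ℂ := fun s => (x:ℂ) ^ (-s) * φ s with hf
  have hxC : (x:ℂ) ≠ 0 := by exact_mod_cast hx.ne'
  have hfd : DifferentiableOn ℂ f {z : ℂ | |z.re| < M} := by
    apply DifferentiableOn.mul _ hd
    exact (Differentiable.const_cpow (differentiable_neg) (Or.inl hxC)).differentiableOn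
  -- vertical integrals converge
  have hV : ∀ σ : ℝ, |σ| < M → Tendsto (fun T : ℝ => ∫ y in (-T)..T, f (σ + y * Complex.I))
      atTop (𝓝 (∫ z : ℝ, (x:ℂ) ^ (-(σ:ℂ) - Complex.I * z) * φ (σ + Complex.I * z))) := by
    intro σ hσ
    have heq : (fun y : ℝ => f (σ + y * Complex.I)) =
        fun y : ℝ => (x:ℂ) ^ (-(σ:ℂ) - Complex.I * y) * φ (σ + Complex.I * y) := by
      funext y
      simp only [hf]
      ring_nf
    rw [heq]
    exact intervalIntegral_tendsto_integral (integrand_integrable hd hC hC₀ hm hσ hx)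
      tendsto_neg_atTop_atBot tendsto_id
  -- horizontal bound
  have hH : ∀ b : ℝ, ‖∫ t in σ₁..σ₂, f (t + b * Complex.I)‖ ≤
      ((x ^ (-σ₁) + x ^ (-σ₂)) * C₀ * (1 + |b|) ^ (-(2:ℝ))) * |σ₂ - σ₁| := by
    intro b
    apply intervalIntegral.norm_integral_le_of_norm_le_const
    intro t ht
    have ht' : t ∈ Set.uIcc σ₁ σ₂ := Set.uIoc_subset_uIcc ht
    have htM : |t| < M := by
      rw [Set.uIcc_eq_union] at ht'
      rcases ht' with h | h <;> rw [abs_lt] at h1 h2 ⊢ <;>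
        constructor <;> cases' h with hl hr <;> linarith
    have hre : ((t:ℂ) + b * Complex.I).re = t := by simp
    have him : ((t:ℂ) + b * Complex.I).im = b := by simp
    have habs : |b| ≤ ‖((t:ℂ) + b * Complex.I)‖ := by
      have := Complex.abs_im_le_norm ((t:ℂ) + b * Complex.I)
      rwa [him] at this
    have hnorm : ‖f ((t:ℂ) + b * Complex.I)‖ =
        x ^ (-t) * ‖φ ((t:ℂ) + b * Complex.I)‖ := by
      rw [hf]
      simp only [norm_mul]
      congr 1
      rw [Complex.norm_cpow_eq_rpow_re_of_pos hx]
      simp [hre]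
    rw [hnorm]
    have hb1 : ‖φ ((t:ℂ) + b * Complex.I)‖ ≤ C₀ * (1 + |b|) ^ (-(2:ℝ)) := by
      refine ((hC _ (by simpa [hre] using htM)).trans ?_)
      have e1 : (1 + ‖((t:ℂ) + b*Complex.I)‖) ^ (-m) ≤ (1 + |b|) ^ (-m) :=
        Real.rpow_le_rpow_of_nonpos (by positivity) (by linarith) (by linarith)
      have e2 : (1 + |b|) ^ (-m) ≤ (1 + |b|) ^ (-(2:ℝ)) :=
        Real.rpow_le_rpow_of_exponent_le (by simp [abs_nonneg]) (by linarith)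
      have := e1.trans e2
      exact mul_le_mul_of_nonneg_left this hC₀
    have hxt : x ^ (-t) ≤ x ^ (-σ₁) + x ^ (-σ₂) := by
      rcases le_total σ₁ σ₂ with hs | hs
      · rw [Set.uIcc_of_le hs] at ht'
        have := rpow_exp_le_sum (u₁ := -σ₂) (u₂ := -σ₁) hx
          (neg_le_neg ht'.2) (neg_le_neg ht'.1)
        linarith
      · rw [Set.uIcc_of_ge hs] at ht'
        have := rpow_exp_le_sum (u₁ := -σ₁) (u₂ := -σ₂) hx
          (neg_le_neg ht'.2) (neg_le_neg ht'.1)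
        linarith
    calc x ^ (-t) * ‖φ ((t:ℂ) + b * Complex.I)‖
        ≤ (x ^ (-σ₁) + x ^ (-σ₂)) * (C₀ * (1 + |b|) ^ (-(2:ℝ))) := by
          apply mul_le_mul hxt hb1 (norm_nonneg _)
          positivity
      _ = (x ^ (-σ₁) + x ^ (-σ₂)) * C₀ * (1 + |b|) ^ (-(2:ℝ)) := by ring
  -- horizontal integrals tend to zero
  have hH0 : ∀ s : ℝ, s = 1 ∨ s = -1 → Tendsto
      (fun T : ℝ => ∫ t in σ₁..σ₂, f (t + ((s * T : ℝ) : ℂ) * Complex.I)) atTop (𝓝 0) := by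
    intro s hs
    refine squeeze_zero_norm' (a := fun T : ℝ =>
      ((x ^ (-σ₁) + x ^ (-σ₂)) * C₀ * |σ₂ - σ₁|) * (1 + T) ^ (-(2:ℝ))) ?_ ?_
    · filter_upwards [eventually_ge_atTop (0:ℝ)] with T hT
      have habs : |s * T| = T := by
        rcases hs with h | h <;> simp [h, _root_.abs_of_nonneg hT]
      calc ‖∫ t in σ₁..σ₂, f (t + ((s * T : ℝ) : ℂ) * Complex.I)‖ ≤
          ((x ^ (-σ₁) + x ^ (-σ₂)) * C₀ * (1 + |s*T|) ^ (-(2:ℝ))) * |σ₂ - σ₁| := hH (s*T)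
        _ = ((x ^ (-σ₁) + x ^ (-σ₂)) * C₀ * |σ₂ - σ₁|) * (1 + T) ^ (-(2:ℝ)) := by
            rw [habs]; ring
    · have h2 : Tendsto (fun T : ℝ => (1 + T)) atTop atTop :=
        tendsto_atTop_add_const_left _ _ tendsto_id
      have h3 := (tendsto_rpow_neg_atTop (by norm_num : (0:ℝ) < 2)).comp h2
      have := h3.const_mul ((x ^ (-σ₁) + x ^ (-σ₂)) * C₀ * |σ₂ - σ₁|)
      simpa using this
  -- rectangle identity
  have hrect : ∀ T : ℝ, 0 ≤ T →
      (∫ y in (-T)..T, f (σ₁ + y * Complex.I)) =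
      (∫ y in (-T)..T, f (σ₂ + y * Complex.I)) +
        Complex.I⁻¹ * ((∫ t in σ₁..σ₂, f (t + (-T) * Complex.I)) -
          (∫ t in σ₁..σ₂, f (t + T * Complex.I))) := by
    intro T hT
    have key := Complex.integral_boundary_rect_eq_zero_of_differentiableOn f
      (⟨σ₁, -T⟩ : ℂ) (⟨σ₂, T⟩ : ℂ) ?_
    · rw [show ((⟨σ₁, -T⟩ : ℂ)).re = σ₁ from rfl, show ((⟨σ₁, -T⟩ : ℂ)).im = -T from rfl,
        show ((⟨σ₂, T⟩ : ℂ)).re = σ₂ from rfl, show ((⟨σ₂, T⟩ : ℂ)).im = T from rfl] at key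
      push_cast at key
      simp only [smul_eq_mul] at key
      have hII : Complex.I⁻¹ * Complex.I = 1 := inv_mul_cancel₀ Complex.I_ne_zero
      linear_combination (-Complex.I⁻¹) * key +
        ((∫ y in (-T)..T, f (σ₂ + y * Complex.I)) -
          (∫ y in (-T)..T, f (σ₁ + y * Complex.I))) * hII
    · refine hfd.mono ?_
      intro s hs
      simp only [Set.mem_setOf_eq]
      have hre := (Complex.mem_reProdIm.mp hs).1
      simp only [show ((⟨σ₁, -T⟩ : ℂ)).re = σ₁ from rfl,
        show ((⟨σ₂, T⟩ : ℂ)).re = σ₂ from rfl] at hre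
      rw [Set.uIcc_eq_union] at hre
      rcases hre with h | h <;> rw [abs_lt] at h1 h2 ⊢ <;>
        cases' h with hl hr <;> constructor <;> linarith
  -- conclude
  have hVlim : Tendsto (fun T : ℝ => ∫ y in (-T)..T, f (σ₁ + y * Complex.I)) atTop
      (𝓝 ((∫ z : ℝ, (x:ℂ) ^ (-(σ₂:ℂ) - Complex.I * z) * φ (σ₂ + Complex.I * z)) +
        Complex.I⁻¹ * (0 - 0))) := by
    apply Tendsto.congr'
    · filter_upwards [eventually_ge_atTop (0:ℝ)] with T hT
      exact (hrect T hT).symm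
    · apply Tendsto.add (hV σ₂ h2)
      apply Tendsto.const_mul
      apply Tendsto.sub
      · have := hH0 (-1) (Or.inr rfl)
        simpa using this
      · have := hH0 1 (Or.inl rfl)
        simpa using this
  have := tendsto_nhds_unique (hV σ₁ h1) (by simpa using hVlim)
  exact this

end

lemma hasDerivAt_real_cpow_const {y : ℝ} (hy : y ≠ 0) {w : ℂ} (hw : w ≠ 0) :
    HasDerivAt (fun t : ℝ => (t : ℂ) ^ w) (w * (y : ℂ) ^ (w - 1)) y := by
  have h := hasDerivAt_ofReal_cpow_const' hy (show w - 1 ≠ -1 by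
    intro h; apply hw; linear_combination h)
  have h2 := h.const_mul w
  simp only [sub_add_cancel] at h2
  have heq : (fun t : ℝ => w * ((t:ℂ) ^ w / w)) = fun t : ℝ => (t:ℂ) ^ w := by
    funext t; field_simp
  rwa [heq] at h2

lemma hasDerivAt_vint {g : ℝ → ℂ} {B : ℝ} (hg : Continuous g)
    (hgB : ∀ z : ℝ, ‖g z‖ ≤ B * (1 + |z|) ^ (-(3:ℝ))) (d : ℂ) {x : ℝ} (hx : 0 < x) :
    HasDerivAt (fun y : ℝ => ∫ z : ℝ, (y:ℂ) ^ (d - Complex.I * z) * g z)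
      (∫ z : ℝ, (d - Complex.I * z) * (x:ℂ) ^ (d - Complex.I * z - 1) * g z) x := by
  have hre : ∀ z : ℝ, (d - Complex.I * (z:ℂ)).re = d.re := by
    intro z; simp
  have hre1 : ∀ z : ℝ, (d - Complex.I * (z:ℂ) - 1).re = d.re - 1 := by
    intro z; simp
  have key := hasDerivAt_integral_of_dominated_loc_of_deriv_le (𝕜 := ℝ) (μ := volume)
    (F := fun y z => (y:ℂ) ^ (d - Complex.I * z) * g z)
    (F' := fun y z => (d - Complex.I * z) * (y:ℂ) ^ (d - Complex.I * z - 1) * g z)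
    (x₀ := x)
    (bound := fun z => ((‖d‖ + 1) * ((x/2) ^ (d.re - 1) + (2*x) ^ (d.re - 1)) * B) *
      (1 + |z|) ^ (-(2:ℝ)))
    (Metric.ball_mem_nhds x (half_pos hx)) ?_ ?_ ?_ ?_ ?_ ?_
  · exact key.2
  · -- measurability of F y for y near x
    filter_upwards [eventually_gt_nhds hx] with y hy
    exact ((Continuous.const_cpow (by continuity)
      (Or.inl (Complex.ofReal_ne_zero.mpr hy.ne'))).mul hg).aestronglyMeasurable
  · -- integrability of F x
    refine Integrable.mono' ((integrable_decay (by norm_num : (2:ℝ) ≤ 3)).const_mul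
      (x ^ d.re * B)) ?_ ?_
    · exact ((Continuous.const_cpow (by continuity)
        (Or.inl (Complex.ofReal_ne_zero.mpr hx.ne'))).mul hg).aestronglyMeasurable
    · filter_upwards with z
      rw [norm_mul]
      have h1 : ‖(x:ℂ) ^ (d - Complex.I * z)‖ = x ^ d.re := by
        rw [Complex.norm_cpow_eq_rpow_re_of_pos hx, hre]
      rw [h1, mul_assoc]
      exact mul_le_mul_of_nonneg_left (hgB z) (Real.rpow_nonneg hx.le _)
  · -- measurability of F' x
    exact (((continuous_const.sub (continuous_const.mul Complex.continuous_ofReal)).mul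
      (Continuous.const_cpow (by continuity)
        (Or.inl (Complex.ofReal_ne_zero.mpr hx.ne')))).mul hg).aestronglyMeasurable
  · -- bound on F'
    filter_upwards with z y hy
    rw [Real.ball_eq_Ioo] at hy
    have hy1 : x / 2 ≤ y := by cases' hy with h _; linarith
    have hy2 : y ≤ 2 * x := by cases' hy with _ h; linarith
    have hy0 : 0 < y := lt_of_lt_of_le (half_pos hx) hy1
    rw [norm_mul, norm_mul]
    have h1 : ‖(y:ℂ) ^ (d - Complex.I * z - 1)‖ = y ^ (d.re - 1) := by
      rw [Complex.norm_cpow_eq_rpow_re_of_pos hy0, hre1]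
    have h2 : ‖(d - Complex.I * (z:ℂ))‖ ≤ ‖d‖ + |z| := by
      refine (norm_sub_le _ _).trans ?_
      simp
    have h3 : y ^ (d.re - 1) ≤ (x/2) ^ (d.re - 1) + (2*x) ^ (d.re - 1) :=
      rpow_le_sum_endpoints (half_pos hx) hy1 hy2
    have hg3 := hgB z
    have hB : 0 ≤ B := by
      have := (norm_nonneg (g 0)).trans (hgB 0)
      nlinarith [Real.rpow_pos_of_pos (show (0:ℝ) < 1 + |(0:ℝ)| by norm_num) (-(3:ℝ))]
    have hd0 : (0:ℝ) ≤ ‖d‖ := norm_nonneg d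
    have hz0 : (0:ℝ) ≤ |z| := abs_nonneg z
    have hP : (0:ℝ) ≤ (x/2) ^ (d.re - 1) + (2*x) ^ (d.re - 1) := by
      have := Real.rpow_nonneg (by linarith : (0:ℝ) ≤ x/2) (d.re - 1)
      have := Real.rpow_nonneg (by linarith : (0:ℝ) ≤ 2*x) (d.re - 1)
      linarith
    have hstep : ‖d - Complex.I * (z:ℂ)‖ * ‖(y:ℂ) ^ (d - Complex.I * z - 1)‖ * ‖g z‖ ≤
        (‖d‖ + |z|) * ((x/2) ^ (d.re - 1) + (2*x) ^ (d.re - 1)) *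
          (B * (1 + |z|) ^ (-(3:ℝ))) := by
      rw [h1]
      have hn1 : (0:ℝ) ≤ ‖d - Complex.I * (z:ℂ)‖ := norm_nonneg _
      have hn3 : (0:ℝ) ≤ ‖g z‖ := norm_nonneg _
      have hyp : (0:ℝ) ≤ y ^ (d.re - 1) := Real.rpow_nonneg hy0.le _
      apply mul_le_mul _ hg3 hn3 (by positivity)
      exact mul_le_mul h2 h3 hyp (by linarith)
    refine hstep.trans ?_
    -- absorb (|d| + |z|) into (|d|+1)(1+|z|)
    have hkey : (1 + |z|) ^ (-(3:ℝ)) * (1 + |z|) = (1 + |z|) ^ (-(2:ℝ)) := by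
      rw [← Real.rpow_add_one (by positivity : (1:ℝ) + |z| ≠ 0)]
      norm_num
    have h3n : (0:ℝ) ≤ (1 + |z|) ^ (-(3:ℝ)) := Real.rpow_nonneg (by positivity) _
    have habs : (‖d‖ + |z|) * (1 + |z|) ^ (-(3:ℝ)) ≤
        (‖d‖ + 1) * (1 + |z|) ^ (-(2:ℝ)) := by
      calc (‖d‖ + |z|) * (1 + |z|) ^ (-(3:ℝ)) ≤
          ((‖d‖ + 1) * (1 + |z|)) * (1 + |z|) ^ (-(3:ℝ)) := by
            apply mul_le_mul_of_nonneg_right _ h3n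
            nlinarith
        _ = (‖d‖ + 1) * (1 + |z|) ^ (-(2:ℝ)) := by
            rw [mul_assoc, mul_comm ((1:ℝ) + |z|), hkey]
    calc (‖d‖ + |z|) * ((x/2) ^ (d.re - 1) + (2*x) ^ (d.re - 1)) *
          (B * (1 + |z|) ^ (-(3:ℝ)))
        = ((‖d‖ + |z|) * (1 + |z|) ^ (-(3:ℝ))) *
            (((x/2) ^ (d.re - 1) + (2*x) ^ (d.re - 1)) * B) := by ring
      _ ≤ ((‖d‖ + 1) * (1 + |z|) ^ (-(2:ℝ))) *
            (((x/2) ^ (d.re - 1) + (2*x) ^ (d.re - 1)) * B) := by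
          apply mul_le_mul_of_nonneg_right habs (by positivity)
      _ = (‖d‖ + 1) * ((x/2) ^ (d.re - 1) + (2*x) ^ (d.re - 1)) * B *
            (1 + |z|) ^ (-(2:ℝ)) := by ring
  · -- integrability of bound
    exact (integrable_decay (le_refl 2)).const_mul _
  · -- differentiability
    have hae : ∀ᵐ z : ℝ, d - Complex.I * (z:ℂ) ≠ 0 := by
      have hsub : {z : ℝ | d - Complex.I * (z:ℂ) = 0}.Subsingleton := by
        intro a ha b hb
        simp only [Set.mem_setOf_eq, sub_eq_zero] at ha hb
        have h := ha.symm.trans hb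
        have := mul_left_cancel₀ Complex.I_ne_zero h
        exact_mod_cast this
      have h0 := hsub.countable.measure_zero volume
      rw [ae_iff]
      simpa using h0
    filter_upwards [hae] with z hz y hy
    rw [Real.ball_eq_Ioo] at hy
    have hy0 : 0 < y := by cases' hy with h _; linarith
    exact (hasDerivAt_real_cpow_const hy0.ne' hz).mul_const (g z)

noncomputable def psiK (φ : ℂ → ℂ) (k : ℕ) : ℂ → ℂ :=
  fun s => (∏ j ∈ Finset.range k, (-s - (j:ℂ))) * φ s

lemma psiK_zero (φ : ℂ → ℂ) : psiK φ 0 = φ := by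
  funext s; simp [psiK]

lemma psiK_succ (φ : ℂ → ℂ) (k : ℕ) (s : ℂ) :
    psiK φ (k+1) s = (-s - (k:ℂ)) * psiK φ k s := by
  simp only [psiK, Finset.prod_range_succ]; ring

lemma psiK_diff {M : ℝ} {φ : ℂ → ℂ} (hd : DifferentiableOn ℂ φ {z : ℂ | |z.re| < M})
    (k : ℕ) : DifferentiableOn ℂ (psiK φ k) {z : ℂ | |z.re| < M} := by
  apply DifferentiableOn.mul _ hd
  apply Differentiable.differentiableOn
  apply Differentiable.fun_finsetProd
  intro j _
  exact (differentiable_id.neg).sub_const _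

lemma psiK_cont_line {M : ℝ} {φ : ℂ → ℂ} (hd : DifferentiableOn ℂ φ {z : ℂ | |z.re| < M})
    {c : ℝ} (hc : |c| < M) (k : ℕ) :
    Continuous fun z : ℝ => psiK φ k (c + Complex.I * z) := by
  apply Continuous.mul
  · apply continuous_finset_prod
    intro j _
    continuity
  · exact ContinuousOn.comp_continuous hd.continuousOn (by continuity)
      (fun z => by simp [hc])

lemma psiK_bound {M m : ℝ} {φ : ℂ → ℂ} {C₀ : ℝ}
    (hC : ∀ z : ℂ, |z.re| < M → ‖φ z‖ ≤ C₀ * (1 + ‖z‖) ^ (-m))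
    (hC₀ : 0 ≤ C₀) (k : ℕ) (s : ℂ) (hs : |s.re| < M) :
    ‖psiK φ k s‖ ≤ ((∏ j ∈ Finset.range k, ((1:ℝ) + j)) * C₀) *
      (1 + ‖s‖) ^ (-(m - k)) := by
  have habs : (0:ℝ) < 1 + ‖s‖ := by
    have := norm_nonneg s; linarith
  rw [psiK, norm_mul, norm_prod]
  have hprod : ∏ j ∈ Finset.range k, ‖-s - (j:ℂ)‖ ≤
      ∏ j ∈ Finset.range k, (((1:ℝ) + j) * (1 + ‖s‖)) := by
    apply Finset.prod_le_prod (fun j _ => norm_nonneg _)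
    intro j _
    have h1 : ‖-s - (j:ℂ)‖ ≤ ‖s‖ + j := by
      refine (norm_sub_le _ _).trans ?_
      simp
    have := norm_nonneg s
    have hj : (0:ℝ) ≤ (j:ℝ) := Nat.cast_nonneg j
    nlinarith
  have hφ := hC s hs
  calc (∏ j ∈ Finset.range k, ‖-s - (j:ℂ)‖) * ‖φ s‖
      ≤ (∏ j ∈ Finset.range k, (((1:ℝ) + j) * (1 + ‖s‖))) *
          (C₀ * (1 + ‖s‖) ^ (-m)) := by
        apply mul_le_mul hprod hφ (norm_nonneg _)
        apply Finset.prod_nonneg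
        intro j _
        have hj : (0:ℝ) ≤ (j:ℝ) := Nat.cast_nonneg j
        nlinarith
    _ = ((∏ j ∈ Finset.range k, ((1:ℝ) + j)) * C₀) *
          ((1 + ‖s‖) ^ (k:ℕ) * (1 + ‖s‖) ^ (-m)) := by
        rw [Finset.prod_mul_distrib, Finset.prod_const, Finset.card_range]
        ring
    _ = ((∏ j ∈ Finset.range k, ((1:ℝ) + j)) * C₀) * (1 + ‖s‖) ^ (-(m - k)) := by
        congr 1
        rw [← Real.rpow_natCast (1 + ‖s‖) k, ← Real.rpow_add habs]
        congr 1
        ring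

section
variable {M m : ℝ} {φ : ℂ → ℂ} {C₀ : ℝ}

lemma norm_inv_two_pi : ‖(1 / (2 * (Real.pi : ℂ)))‖ = 1 / (2 * Real.pi) := by
  have h : (2 * (Real.pi:ℂ)) = ((2 * Real.pi : ℝ) : ℂ) := by push_cast; ring
  rw [h, norm_div, norm_one, Complex.norm_real, Real.norm_eq_abs,
    abs_of_pos (by positivity : (0:ℝ) < 2 * Real.pi)]

lemma mellin_bound (hd : DifferentiableOn ℂ φ {z : ℂ | |z.re| < M})
    (hC : ∀ z : ℂ, |z.re| < M → ‖φ z‖ ≤ C₀ * (1 + ‖z‖) ^ (-m))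
    (hC₀ : 0 ≤ C₀) (hm : 2 ≤ m) {c : ℝ} (hMc : |c| < M) {M' : ℝ}
    (hM' : M' ∈ Set.Ioo (0:ℝ) M) :
    ∃ C > 0, (∀ x ∈ Set.Ioc (0:ℝ) 1, ‖mellinInvC c φ x‖ ≤ C * x ^ (M' - 2*|c|)) ∧
      (∀ x ∈ Set.Ici (1:ℝ), ‖mellinInvC c φ x‖ ≤ C * x ^ (-M' + 2*|c|)) := by
  obtain ⟨hM'0, hM'M⟩ := hM'
  set Km := ∫ z : ℝ, (1 + |z|) ^ (-m) with hKmdef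
  have hKm : 0 ≤ Km := integral_nonneg fun z => Real.rpow_nonneg (by positivity) _
  have hπ : (0:ℝ) < Real.pi := Real.pi_pos
  set C := (1 / (2*Real.pi)) * C₀ * Km + 1 with hCdef
  have hCpos : 0 < C := by positivity
  have habsc : (0:ℝ) ≤ |c| := abs_nonneg c
  have hC' : (1 / (2*Real.pi)) * C₀ * Km ≤ C := by rw [hCdef]; linarith
  refine ⟨C, hCpos, ?_, ?_⟩
  · intro x hx
    obtain ⟨hx0, hx1⟩ := hx
    have hσ : |(|c| - M')| < M := by
      rw [abs_lt]; constructor <;> linarith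
    have hshift := vint_shift hd hC hC₀ hm hMc hσ hx0
    rw [mellinInvC, norm_mul, norm_inv_two_pi, hshift]
    have hb := vint_norm_le hd hC hC₀ hm hσ hx0
    have hxe : x ^ (-(|c| - M')) ≤ x ^ (M' - 2*|c|) :=
      Real.rpow_le_rpow_of_exponent_ge hx0 hx1 (by linarith)
    calc (1/(2*Real.pi)) * ‖∫ z : ℝ, (x:ℂ) ^ (-((|c| - M' : ℝ):ℂ) - Complex.I * z) *
            φ ((|c| - M' : ℝ) + Complex.I * z)‖
        ≤ (1/(2*Real.pi)) * (x ^ (-(|c| - M')) * C₀ * Km) := by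
          apply mul_le_mul_of_nonneg_left hb (by positivity)
      _ = ((1/(2*Real.pi)) * C₀ * Km) * x ^ (-(|c| - M')) := by ring
      _ ≤ C * x ^ (M' - 2*|c|) :=
          mul_le_mul hC' hxe (Real.rpow_nonneg hx0.le _) hCpos.le
  · intro x hx
    have hx0 : (0:ℝ) < x := lt_of_lt_of_le zero_lt_one hx
    have hσ : |(M' - |c|)| < M := by
      rw [abs_lt]; constructor <;> linarith
    have hshift := vint_shift hd hC hC₀ hm hMc hσ hx0
    rw [mellinInvC, norm_mul, norm_inv_two_pi, hshift]
    have hb := vint_norm_le hd hC hC₀ hm hσ hx0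
    have hxe : x ^ (-(M' - |c|)) ≤ x ^ (-M' + 2*|c|) :=
      Real.rpow_le_rpow_of_exponent_le hx (by linarith)
    calc (1/(2*Real.pi)) * ‖∫ z : ℝ, (x:ℂ) ^ (-((M' - |c| : ℝ):ℂ) - Complex.I * z) *
            φ ((M' - |c| : ℝ) + Complex.I * z)‖
        ≤ (1/(2*Real.pi)) * (x ^ (-(M' - |c|)) * C₀ * Km) := by
          apply mul_le_mul_of_nonneg_left hb (by positivity)
      _ = ((1/(2*Real.pi)) * C₀ * Km) * x ^ (-(M' - |c|)) := by ring
      _ ≤ C * x ^ (-M' + 2*|c|) :=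
          mul_le_mul hC' hxe (Real.rpow_nonneg hx0.le _) hCpos.le

lemma iterated_eq (hd : DifferentiableOn ℂ φ {z : ℂ | |z.re| < M})
    (hC : ∀ z : ℂ, |z.re| < M → ‖φ z‖ ≤ C₀ * (1 + ‖z‖) ^ (-m))
    (hC₀ : 0 ≤ C₀) {c : ℝ} (hMc : |c| < M) :
    ∀ k : ℕ, (k:ℝ) + 2 ≤ m → ∀ x : ℝ, 0 < x →
      iteratedDeriv k (mellinInvC c φ) x = (1 / (2 * (Real.pi:ℂ))) *
        ∫ z : ℝ, (x:ℂ) ^ ((-(c:ℂ) - (k:ℂ)) - Complex.I * z) *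
          psiK φ k (c + Complex.I * z) := by
  intro k
  induction k with
  | zero =>
    intro _ x hx
    rw [iteratedDeriv_zero, mellinInvC, psiK_zero]
    norm_num
  | succ k IH =>
    intro hk x hx
    have hk' : (k:ℝ) + 2 ≤ m := by push_cast at hk ⊢; linarith
    have hk3 : (k:ℝ) + 3 ≤ m := by push_cast at hk ⊢; linarith
    rw [iteratedDeriv_succ]
    have hEe : iteratedDeriv k (mellinInvC c φ) =ᶠ[𝓝 x]
        (fun y : ℝ => (1 / (2 * (Real.pi:ℂ))) *
          ∫ z : ℝ, (y:ℂ) ^ ((-(c:ℂ) - (k:ℂ)) - Complex.I * z) *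
            psiK φ k (c + Complex.I * z)) := by
      filter_upwards [eventually_gt_nhds hx] with y hy
      exact IH hk' y hy
    rw [hEe.deriv_eq]
    have hgc : Continuous fun z : ℝ => psiK φ k (c + Complex.I * z) :=
      psiK_cont_line hd hMc k
    set Bk : ℝ := (∏ j ∈ Finset.range k, ((1:ℝ) + j)) * C₀ with hBkdef
    have hBk0 : 0 ≤ Bk := by
      apply mul_nonneg _ hC₀
      apply Finset.prod_nonneg
      intro j _
      positivity
    have hgB : ∀ z : ℝ, ‖psiK φ k (c + Complex.I * z)‖ ≤ Bk * (1 + |z|) ^ (-(3:ℝ)) := by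
      intro z
      have h1 := psiK_bound hC hC₀ k (c + Complex.I * z) (by simp [hMc])
      have hzabs : 1 + |z| ≤ 1 + ‖(↑c + Complex.I * ↑z)‖ := by
        have h := Complex.abs_im_le_norm (↑c + Complex.I * ↑z)
        simp only [Complex.add_im, Complex.ofReal_im, Complex.mul_im, Complex.I_re,
          Complex.I_im, Complex.ofReal_re, Complex.ofReal_im, zero_mul, one_mul,
          mul_zero, zero_add] at h
        linarith
      refine h1.trans ?_
      have e1 : (1 + ‖(↑c + Complex.I * ↑z)‖) ^ (-(m - k)) ≤
          (1 + |z|) ^ (-(m - k)) :=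
        Real.rpow_le_rpow_of_nonpos (by positivity) hzabs (by linarith)
      have e2 : (1 + |z|) ^ (-(m - k)) ≤ (1 + |z|) ^ (-(3:ℝ)) :=
        Real.rpow_le_rpow_of_exponent_le (by simp [abs_nonneg]) (by linarith)
      exact mul_le_mul_of_nonneg_left (e1.trans e2) hBk0
    have hder := hasDerivAt_vint hgc hgB (-(c:ℂ) - (k:ℂ)) hx
    have hder2 := HasDerivAt.const_mul (1 / (2 * (Real.pi:ℂ))) hder
    rw [hder2.deriv]
    congr 1
    have hint : (fun z : ℝ => ((-(c:ℂ) - (k:ℂ)) - Complex.I * z) *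
        (x:ℂ) ^ ((-(c:ℂ) - (k:ℂ)) - Complex.I * z - 1) * psiK φ k (c + Complex.I * z)) =
        fun z : ℝ => (x:ℂ) ^ ((-(c:ℂ) - ((k+1 : ℕ):ℂ)) - Complex.I * z) *
          psiK φ (k+1) (c + Complex.I * z) := by
      funext z
      rw [psiK_succ]
      rw [show ((-(c:ℂ) - (k:ℂ)) - Complex.I * z - 1) =
        ((-(c:ℂ) - ((k+1 : ℕ):ℂ)) - Complex.I * z) by push_cast; ring]
      push_cast
      ring
    rw [hint]

end
end MellinAux

theorem mellinInv_properties (c M m : ℝ) (φ : ℂ → ℂ)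
    (hφ : memX M m φ) (hMc : |c| < M) (hm : 2 ≤ m) :
    (∀ x : ℝ, 0 < x →
      mellinInvC c φ x = (1 / (2 * (Real.pi : ℂ))) * (x : ℂ) ^ (-(c : ℂ)) *
        fourierT (fun z => φ (c + Complex.I * z)) (Real.log x)) ∧
    (∀ M' ∈ Set.Ioo (0 : ℝ) M, ∃ C > 0,
      (∀ x ∈ Set.Ioc (0 : ℝ) 1, ‖mellinInvC c φ x‖ ≤ C * x ^ (M' - 2 * |c|)) ∧
      (∀ x ∈ Set.Ici (1 : ℝ), ‖mellinInvC c φ x‖ ≤ C * x ^ (-M' + 2 * |c|))) ∧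
    (∀ k : ℕ, (k : ℝ) + 2 ≤ m → ∀ M' ∈ Set.Ioo (0 : ℝ) M, ∃ C > 0,
      (∀ x ∈ Set.Ioc (0 : ℝ) 1,
        ‖iteratedDeriv k (mellinInvC c φ) x‖ ≤ C * x ^ (M' - k - 2 * |c|)) ∧
      (∀ x ∈ Set.Ici (1 : ℝ),
        ‖iteratedDeriv k (mellinInvC c φ) x‖ ≤ C * x ^ (-M' - k + 2 * |c|))) := by
  obtain ⟨hφd, C₀, hC₀pos, hφC⟩ := hφ
  refine ⟨?_, ?_, ?_⟩
  · -- Part 1 : Fourier representation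
    intro x hx
    have hxC : (x:ℂ) ≠ 0 := by exact_mod_cast hx.ne'
    rw [mellinInvC, fourierT]
    have hpt : ∀ z : ℝ, (x:ℂ) ^ (-(c:ℂ) - Complex.I * z) =
        (x:ℂ) ^ (-(c:ℂ)) * Complex.exp (-Complex.I * z * (Real.log x : ℂ)) := by
      intro z
      rw [Complex.cpow_def_of_ne_zero hxC, Complex.cpow_def_of_ne_zero hxC,
        ← Complex.exp_add, ← Complex.ofReal_log hx.le]
      congr 1
      ring
    have hfe : (fun z : ℝ => (x:ℂ) ^ (-(c:ℂ) - Complex.I * z) * φ (c + Complex.I * z)) =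
        fun z : ℝ => (x:ℂ) ^ (-(c:ℂ)) *
          (Complex.exp (-Complex.I * z * (Real.log x : ℂ)) * φ (c + Complex.I * z)) := by
      funext z
      rw [hpt z]
      ring
    rw [hfe, integral_const_mul, ← mul_assoc]
  · -- Part 2 : decay of the transform
    intro M' hM'
    exact MellinAux.mellin_bound hφd hφC hC₀pos.le hm hMc hM'
  · -- Part 3 : decay of the derivatives
    intro k hk M' hM'
    have hmk : 2 ≤ m - k := by linarith
    set Bk : ℝ := (∏ j ∈ Finset.range k, ((1:ℝ) + j)) * C₀ with hBkdef
    have hBk0 : 0 ≤ Bk := by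
      apply mul_nonneg _ hC₀pos.le
      apply Finset.prod_nonneg
      intro j _
      positivity
    have hCk : ∀ s : ℂ, |s.re| < M → ‖MellinAux.psiK φ k s‖ ≤
        Bk * (1 + ‖s‖) ^ (-(m - k)) :=
      fun s hs => MellinAux.psiK_bound hφC hC₀pos.le k s hs
    obtain ⟨C, hCpos, hsmall, hbig⟩ :=
      MellinAux.mellin_bound (MellinAux.psiK_diff hφd k) hCk hBk0 hmk hMc hM'
    have hsplit : ∀ x : ℝ, 0 < x → iteratedDeriv k (mellinInvC c φ) x =
        (x:ℂ) ^ (-(k:ℂ)) * mellinInvC c (MellinAux.psiK φ k) x := by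
      intro x hx
      have hxC : (x:ℂ) ≠ 0 := by exact_mod_cast hx.ne'
      rw [MellinAux.iterated_eq hφd hφC hC₀pos.le hMc k hk x hx, mellinInvC]
      rw [show (fun z : ℝ => (x:ℂ) ^ ((-(c:ℂ) - (k:ℂ)) - Complex.I * z) *
          MellinAux.psiK φ k (c + Complex.I * z)) =
          fun z : ℝ => (x:ℂ) ^ (-(k:ℂ)) * ((x:ℂ) ^ (-(c:ℂ) - Complex.I * z) *
            MellinAux.psiK φ k (c + Complex.I * z)) from funext fun z => by
          rw [← mul_assoc, ← Complex.cpow_add _ _ hxC]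
          congr 2
          ring]
      rw [integral_const_mul]
      ring
    have hxknorm : ∀ x : ℝ, 0 < x → ‖(x:ℂ) ^ (-(k:ℂ))‖ = x ^ (-(k:ℝ)) := by
      intro x hx
      rw [Complex.norm_cpow_eq_rpow_re_of_pos hx]
      norm_num
    refine ⟨C, hCpos, ?_, ?_⟩
    · intro x hx
      obtain ⟨hx0, hx1⟩ := hx
      rw [hsplit x hx0, norm_mul, hxknorm x hx0]
      calc x ^ (-(k:ℝ)) * ‖mellinInvC c (MellinAux.psiK φ k) x‖
          ≤ x ^ (-(k:ℝ)) * (C * x ^ (M' - 2*|c|)) := by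
            apply mul_le_mul_of_nonneg_left (hsmall x ⟨hx0, hx1⟩)
              (Real.rpow_nonneg hx0.le _)
        _ = C * (x ^ (-(k:ℝ)) * x ^ (M' - 2*|c|)) := by ring
        _ = C * x ^ (M' - k - 2*|c|) := by
            rw [← Real.rpow_add hx0,
              show -(k:ℝ) + (M' - 2*|c|) = M' - (k:ℝ) - 2*|c| from by ring]
    · intro x hx
      have hx0 : (0:ℝ) < x := lt_of_lt_of_le zero_lt_one hx
      rw [hsplit x hx0, norm_mul, hxknorm x hx0]
      calc x ^ (-(k:ℝ)) * ‖mellinInvC c (MellinAux.psiK φ k) x‖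
          ≤ x ^ (-(k:ℝ)) * (C * x ^ (-M' + 2*|c|)) := by
            apply mul_le_mul_of_nonneg_left (hbig x hx)
              (Real.rpow_nonneg hx0.le _)
        _ = C * (x ^ (-(k:ℝ)) * x ^ (-M' + 2*|c|)) := by ring
        _ = C * x ^ (-M' - k + 2*|c|) := by
            rw [← Real.rpow_add hx0,
              show -(k:ℝ) + (-M' + 2*|c|) = -M' - (k:ℝ) + 2*|c| from by ring]
end

section
/- Let M > 1/2, m ≥ 2, and let u ∈ L¹_loc(0,∞) be such that ∫₀^∞ u(x) M⁻¹[φ](x) dx is absolutely convergent for every φ ∈ X_{M,m}. If ∫₀^∞ u(x) M⁻¹[φ](x) dx = 0 for every φ ∈ X_{M,m}, then u = 0 almost everywhere in (0,∞). -/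
/-!
STATEMENT 9: fundamental lemma of the calculus of variations for the distributional
Mellin transform: if u ∈ L¹_loc(0,∞) and ∫₀^∞ u(x) M⁻¹[φ](x) dx = 0 (with absolute
convergence) for every φ ∈ X_{M,m}, with M > 1/2 and m ≥ 2, then u = 0 a.e. in (0,∞).
-/

open MeasureTheory

namespace MellinFL

open Complex Set Filter Function
open scoped ContDiff

/-- the operator `g ↦ x g'(x)`. -/
noncomputable def Dop (g : ℝ → ℂ) : ℝ → ℂ := fun x => (x : ℂ) * deriv g x

/-- a smooth test function with support inside `[a, b]`. -/
structure TestFn (a b : ℝ) (g : ℝ → ℂ) : Prop where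
  smooth : ContDiff ℝ ∞ g
  supp : tsupport g ⊆ Set.Icc a b

variable {a b : ℝ} {g : ℝ → ℂ}

lemma TestFn.hcs (hg : TestFn a b g) : HasCompactSupport g :=
  isCompact_Icc.of_isClosed_subset (isClosed_tsupport g) hg.supp

lemma TestFn.cont (hg : TestFn a b g) : Continuous g := hg.smooth.continuous

lemma TestFn.zero_of_nmem (hg : TestFn a b g) {x : ℝ} (hx : x ∉ Set.Icc a b) : g x = 0 :=
  image_eq_zero_of_notMem_tsupport fun h => hx (hg.supp h)

lemma TestFn.deriv_zero_of_nmem (hg : TestFn a b g) {x : ℝ} (hx : x ∉ Set.Icc a b) :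
    deriv g x = 0 := by
  by_contra h
  exact hx (hg.supp (support_deriv_subset h))

lemma TestFn.dop (hg : TestFn a b g) : TestFn a b (Dop g) where
  smooth := by
    have h1 : ContDiff ℝ ∞ (fun x : ℝ => (x : ℂ)) := Complex.ofRealCLM.contDiff
    exact h1.mul (contDiff_infty_iff_deriv.mp hg.smooth).2
  supp := by
    refine subset_trans (closure_minimal ?_ (isClosed_tsupport g)) hg.supp
    intro x hx
    have : deriv g x ≠ 0 := fun h => hx (by simp [Dop, h, Function.mem_support])
    exact support_deriv_subset this

lemma TestFn.iter (hg : TestFn a b g) (k : ℕ) : TestFn a b (Dop^[k] g) := by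
  induction k with
  | zero => exact hg
  | succ n ih => rw [Function.iterate_succ_apply']; exact ih.dop

lemma testfn_cont_cpow_mul (ha : 0 < a) (hg : TestFn a b g) (s : ℂ) :
    Continuous fun x : ℝ => (x : ℂ) ^ s * g x := by
  rw [continuous_iff_continuousAt]
  intro x
  by_cases hx : x ∈ tsupport g
  · have hx0 : 0 < x := lt_of_lt_of_le ha (hg.supp hx).1
    exact (continuousAt_ofReal_cpow_const x s (Or.inr hx0.ne')).mul
      hg.cont.continuousAt
  · have h0 : (fun y : ℝ => (y : ℂ) ^ s * g y) =ᶠ[nhds x] (fun _ => 0) := by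
      filter_upwards [(isClosed_tsupport g).isOpen_compl.mem_nhds hx] with y hy
      simp [image_eq_zero_of_notMem_tsupport hy]
    exact (continuousAt_congr h0).mpr continuousAt_const

lemma testfn_hcs_cpow_mul (hg : TestFn a b g) (s : ℂ) :
    HasCompactSupport fun x : ℝ => (x : ℂ) ^ s * g x :=
  hg.hcs.mul_left

lemma testfn_mellin_integrable (ha : 0 < a) (hg : TestFn a b g) (s : ℂ) :
    MellinConvergent g s := by
  have h1 : Integrable (fun x : ℝ => (x : ℂ) ^ (s - 1) * g x) :=
    (testfn_cont_cpow_mul ha hg (s - 1)).integrable_of_hasCompactSupport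
      (testfn_hcs_cpow_mul hg (s - 1))
  simpa [MellinConvergent, smul_eq_mul] using h1.integrableOn

lemma testfn_norm_integrable (hg : TestFn a b g) :
    IntegrableOn (fun x : ℝ => ‖g x‖) (Set.Ioi 0) :=
  (hg.cont.norm.integrable_of_hasCompactSupport hg.hcs.norm).integrableOn

lemma testfn_mellin_norm_le {M : ℝ} (ha : 0 < a) (hM : 0 < M) (hg : TestFn a b g) {z : ℂ}
    (hz : |z.re| < M) :
    ‖mellin g z‖ ≤ (max a⁻¹ b) ^ (M + 1) * ∫ x in Set.Ioi (0 : ℝ), ‖g x‖ := by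
  set B := (max a⁻¹ b) ^ (M + 1) with hB
  have hBpos : 0 < max a⁻¹ b := lt_max_iff.mpr (Or.inl (inv_pos.mpr ha))
  have hB0 : 0 ≤ B := (Real.rpow_pos_of_pos hBpos _).le
  have key : ∀ x ∈ Set.Ioi (0 : ℝ), ‖(x : ℂ) ^ (z - 1) • g x‖ ≤ B * ‖g x‖ := by
    intro x hx
    by_cases hgx : g x = 0
    · simp [hgx, hB0]
    · have hxs : x ∈ Set.Icc a b := hg.supp (subset_tsupport _ hgx)
      have hx0 : (0 : ℝ) < x := hx
      rw [norm_smul]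
      have hnorm : ‖(x : ℂ) ^ (z - 1)‖ = x ^ (z.re - 1) := by
        rw [Complex.norm_cpow_eq_rpow_re_of_pos hx0]
        simp
      rw [hnorm]
      have habs := abs_lt.mp hz
      have hbound : x ^ (z.re - 1) ≤ B := by
        rcases le_total 1 x with h1 | h1
        · calc x ^ (z.re - 1) ≤ x ^ (M + 1) :=
              Real.rpow_le_rpow_of_exponent_le h1 (by linarith [habs.2])
            _ ≤ (max a⁻¹ b) ^ (M + 1) :=
              Real.rpow_le_rpow hx0.le (le_trans hxs.2 (le_max_right _ _)) (by linarith)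
        · calc x ^ (z.re - 1) ≤ x ^ (-(M + 1)) :=
              Real.rpow_le_rpow_of_exponent_ge hx0 h1 (by linarith [habs.1])
            _ = (x⁻¹) ^ (M + 1) := by
              rw [Real.rpow_neg hx0.le, ← Real.inv_rpow hx0.le]
            _ ≤ (max a⁻¹ b) ^ (M + 1) := Real.rpow_le_rpow (inv_nonneg.mpr hx0.le)
                (le_trans (by
                  exact inv_anti₀ ha hxs.1) (le_max_left _ _)) (by linarith)
      exact mul_le_mul_of_nonneg_right hbound (norm_nonneg _)
  calc ‖mellin g z‖ ≤ ∫ x in Set.Ioi (0 : ℝ), ‖(x : ℂ) ^ (z - 1) • g x‖ :=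
        norm_integral_le_integral_norm _
    _ ≤ ∫ x in Set.Ioi (0 : ℝ), B * ‖g x‖ :=
        setIntegral_mono_on (testfn_mellin_integrable ha hg z).norm
          ((testfn_norm_integrable hg).const_mul B) measurableSet_Ioi key
    _ = B * ∫ x in Set.Ioi (0 : ℝ), ‖g x‖ := integral_const_mul _ _

lemma testfn_mellin_dop (ha : 0 < a) (hab : a ≤ b) (hg : TestFn a b g) (s : ℂ) :
    mellin (Dop g) s = -s * mellin g s := by
  set a' := a / 2 with ha'
  set b' := b + 1 with hb'
  have ha'0 : 0 < a' := by positivity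
  have ha'b' : a' ≤ b' := by simp only [ha', hb']; linarith
  have hIcc : Set.Icc a b ⊆ Set.Ioc a' b' := fun x hx =>
    ⟨lt_of_lt_of_le (by simp only [ha']; linarith) hx.1, le_trans hx.2 (by simp only [hb']; linarith)⟩
  have huIcc : Set.uIcc a' b' ⊆ Set.Ioi (0 : ℝ) := by
    rw [Set.uIcc_of_le ha'b']
    exact fun x hx => lt_of_lt_of_le ha'0 hx.1
  -- convert Mellin integrals to interval integrals
  have conv1 : ∀ h' : ℝ → ℂ, (∀ x, x ∉ Set.Icc a b → h' x = 0) →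
      (∫ x in Set.Ioi (0 : ℝ), h' x) = ∫ x in a'..b', h' x := by
    intro h' hsupp
    have e1 : (∫ x in Set.Ioi (0 : ℝ), h' x) = ∫ x, h' x :=
      setIntegral_eq_integral_of_forall_compl_eq_zero
        (fun x hx => hsupp x (fun hc => hx (lt_of_lt_of_le ha hc.1)))
    rw [e1]
    exact (intervalIntegral.integral_eq_integral_of_support_subset
      (fun x hx => hIcc (by by_contra hc; exact hx (hsupp x hc)))).symm
  have hmg : mellin g s = ∫ x in a'..b', (x : ℂ) ^ (s - 1) * g x := by
    rw [mellin, ← conv1 _ (fun x hx => by simp [hg.zero_of_nmem hx])]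
    simp [smul_eq_mul]
  have hmd : mellin (Dop g) s = ∫ x in a'..b', (x : ℂ) ^ s * deriv g x := by
    rw [mellin, ← conv1 (fun x => (x : ℂ) ^ s * deriv g x)
      (fun x hx => by simp [hg.deriv_zero_of_nmem hx])]
    refine setIntegral_congr_fun measurableSet_Ioi fun x hx => ?_
    have hx0 : (0 : ℝ) < x := hx
    have hxne : (x : ℂ) ≠ 0 := Complex.ofReal_ne_zero.mpr hx0.ne'
    rw [smul_eq_mul, Dop]
    have : (x : ℂ) ^ s = (x : ℂ) ^ (s - 1) * (x : ℂ) := by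
      calc (x : ℂ) ^ s = (x : ℂ) ^ (s - 1 + 1) := by congr 1; ring
        _ = (x : ℂ) ^ (s - 1) * (x : ℂ) ^ (1 : ℂ) := Complex.cpow_add _ _ hxne
        _ = (x : ℂ) ^ (s - 1) * (x : ℂ) := by rw [Complex.cpow_one]
    rw [this]; ring
  -- continuity facts
  have hcpow : ∀ w : ℂ, ContinuousOn (fun x : ℝ => (x : ℂ) ^ w) (Set.uIcc a' b') :=
    fun w x hx => (Complex.continuousAt_ofReal_cpow_const x w
      (Or.inr (huIcc hx).ne')).continuousWithinAt
  have hderivc : Continuous (deriv g) := (contDiff_infty_iff_deriv.mp hg.smooth).2.continuous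
  have hint1 : IntervalIntegrable (fun x : ℝ => (x : ℂ) ^ s * deriv g x) volume a' b' :=
    (((hcpow s).mul hderivc.continuousOn)).intervalIntegrable
  have hint2 : IntervalIntegrable (fun x : ℝ => s * ((x : ℂ) ^ (s - 1) * g x)) volume a' b' :=
    (continuousOn_const.mul ((hcpow (s - 1)).mul hg.cont.continuousOn)).intervalIntegrable
  -- FTC
  have hF : ∀ x ∈ Set.uIcc a' b',
      HasDerivAt (fun y : ℝ => (y : ℂ) ^ s * g y)
        ((x : ℂ) ^ s * deriv g x + s * ((x : ℂ) ^ (s - 1) * g x)) x := by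
    intro x hx
    have hx0 : 0 < x := huIcc hx
    have h1 : HasDerivAt (fun y : ℝ => (y : ℂ) ^ s) (s * (x : ℂ) ^ (s - 1)) x :=
      ((Complex.hasStrictDerivAt_cpow_const
        (Complex.ofReal_mem_slitPlane.mpr hx0)).hasDerivAt).comp_ofReal
    have h2 : HasDerivAt g (deriv g x) x :=
      ((hg.smooth.differentiable (by simp)) x).hasDerivAt
    have := h1.mul h2
    convert this using 1
    · rfl
    · rfl
    ring
  have heval := intervalIntegral.integral_eq_sub_of_hasDerivAt hF (hint1.add hint2)
  have hFa : ((a' : ℂ)) ^ s * g a' = 0 := by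
    rw [hg.zero_of_nmem (fun hc => absurd hc.1 (by simp only [ha']; intro h; linarith))]
    ring
  have hFb : ((b' : ℂ)) ^ s * g b' = 0 := by
    rw [hg.zero_of_nmem (fun hc => absurd hc.2 (by simp only [hb']; intro h; linarith))]
    ring
  rw [hFa, hFb, sub_zero, intervalIntegral.integral_add hint1 hint2,
    intervalIntegral.integral_const_mul] at heval
  rw [hmd, hmg]
  have := heval
  linear_combination heval

lemma testfn_mellin_iter (ha : 0 < a) (hab : a ≤ b) (hg : TestFn a b g) (k : ℕ) (s : ℂ) :
    s ^ k * mellin g s = (-1) ^ k * mellin (Dop^[k] g) s := by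
  induction k with
  | zero => simp
  | succ n ih =>
    have h1 := testfn_mellin_dop ha hab (hg.iter n) s
    rw [Function.iterate_succ_apply', h1, pow_succ, pow_succ]
    linear_combination s * ih

lemma testfn_mellin_differentiableAt (ha : 0 < a) (hg : TestFn a b g) (s : ℂ) :
    DifferentiableAt ℂ (mellin g) s := by
  have hloc : LocallyIntegrableOn g (Set.Ioi (0 : ℝ)) :=
    hg.cont.locallyIntegrable.locallyIntegrableOn _
  have htop : g =O[atTop] fun x : ℝ => x ^ (-(s.re + 1)) := by
    have h0 : (fun x : ℝ => g x) =ᶠ[atTop] (fun _ => (0 : ℂ)) := by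
      filter_upwards [eventually_gt_atTop b] with x hx
      exact hg.zero_of_nmem (fun hc => absurd hc.2 (not_le.mpr hx))
    exact h0.trans_isBigO (Asymptotics.isBigO_zero _ _)
  have hbot : g =O[nhdsWithin 0 (Set.Ioi 0)] fun x : ℝ => x ^ (-(s.re - 1)) := by
    have h0 : (fun x : ℝ => g x) =ᶠ[nhdsWithin 0 (Set.Ioi 0)] (fun _ => (0 : ℂ)) := by
      filter_upwards [mem_nhdsWithin_of_mem_nhds (Iio_mem_nhds ha)] with x hx
      exact hg.zero_of_nmem (fun hc => absurd hc.1 (not_le.mpr hx))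
    exact h0.trans_isBigO (Asymptotics.isBigO_zero _ _)
  exact mellin_differentiableAt_of_isBigO_rpow hloc htop (by linarith) hbot (by linarith)

lemma testfn_memX {M m : ℝ} (hM : 1/2 < M) (hm : 2 ≤ m) (ha : 0 < a) (hab : a ≤ b)
    (hg : TestFn a b g) : memX M m (mellin g) := by
  have hM0 : (0 : ℝ) < M := by linarith
  have hm0 : (0 : ℝ) ≤ m := by linarith
  constructor
  · exact fun z _ => (testfn_mellin_differentiableAt ha hg z).differentiableWithinAt
  · set k := ⌈m⌉₊ with hk
    have hmk : m ≤ (k : ℝ) := Nat.le_ceil m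
    set B := (max a⁻¹ b) ^ (M + 1) with hB
    have hBpos : 0 < max a⁻¹ b := lt_max_iff.mpr (Or.inl (inv_pos.mpr ha))
    have hB0 : 0 ≤ B := (Real.rpow_pos_of_pos hBpos _).le
    set I0 := ∫ x in Set.Ioi (0 : ℝ), ‖g x‖ with hI0def
    set Ik := ∫ x in Set.Ioi (0 : ℝ), ‖(Dop^[k] g) x‖ with hIkdef
    have hI0 : 0 ≤ I0 := integral_nonneg fun x => norm_nonneg _
    have hIk : 0 ≤ Ik := integral_nonneg fun x => norm_nonneg _
    refine ⟨2 ^ k * (B * (I0 + Ik)) + 1, by positivity, fun z hz => ?_⟩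
    have habs0 : (0 : ℝ) ≤ ‖z‖ := norm_nonneg z
    have h1abs : (0 : ℝ) < 1 + ‖z‖ := by linarith
    have hpow_pos : 0 < (1 + ‖z‖) ^ m := Real.rpow_pos_of_pos h1abs m
    -- main estimate
    have hmain : ‖mellin g z‖ * (1 + ‖z‖) ^ m ≤ 2 ^ k * (B * (I0 + Ik)) + 1 := by
      have h2k : (0 : ℝ) < 2 ^ k := by positivity
      rcases le_total (‖z‖) 1 with hz1 | hz1
      · have h1 : ‖mellin g z‖ ≤ B * I0 := testfn_mellin_norm_le ha hM0 hg hz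
        have h2 : (1 + ‖z‖) ^ m ≤ (2 : ℝ) ^ k := by
          calc (1 + ‖z‖) ^ m ≤ (2 : ℝ) ^ m :=
                Real.rpow_le_rpow h1abs.le (by linarith) hm0
            _ ≤ (2 : ℝ) ^ (k : ℝ) :=
                Real.rpow_le_rpow_of_exponent_le one_le_two hmk
            _ = (2 : ℝ) ^ k := Real.rpow_natCast 2 k
        nlinarith [mul_le_mul h1 h2 hpow_pos.le (by positivity : (0:ℝ) ≤ B * I0),
          mul_nonneg h2k.le (mul_nonneg hB0 hIk)]
      · have hiter := testfn_mellin_iter ha hab hg k z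
        have hnorm : ‖z‖ ^ k * ‖mellin g z‖ = ‖mellin (Dop^[k] g) z‖ := by
          have := congrArg norm hiter
          simpa [norm_mul, norm_pow] using this
        have hk1 : ‖mellin (Dop^[k] g) z‖ ≤ B * Ik :=
          testfn_mellin_norm_le ha hM0 (hg.iter k) hz
        have h2 : (1 + ‖z‖) ^ m ≤ 2 ^ k * ‖z‖ ^ k := by
          calc (1 + ‖z‖) ^ m ≤ (2 * ‖z‖) ^ m :=
                Real.rpow_le_rpow h1abs.le (by linarith) hm0
            _ ≤ (2 * ‖z‖) ^ (k : ℝ) :=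
                Real.rpow_le_rpow_of_exponent_le (by linarith) hmk
            _ = (2 * ‖z‖) ^ k := Real.rpow_natCast _ k
            _ = 2 ^ k * ‖z‖ ^ k := mul_pow _ _ _
        calc ‖mellin g z‖ * (1 + ‖z‖) ^ m
            ≤ ‖mellin g z‖ * (2 ^ k * ‖z‖ ^ k) :=
              mul_le_mul_of_nonneg_left h2 (norm_nonneg _)
          _ = 2 ^ k * (‖z‖ ^ k * ‖mellin g z‖) := by ring
          _ = 2 ^ k * ‖mellin (Dop^[k] g) z‖ := by rw [hnorm]
          _ ≤ 2 ^ k * (B * Ik) := by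
              exact mul_le_mul_of_nonneg_left hk1 h2k.le
          _ ≤ 2 ^ k * (B * (I0 + Ik)) + 1 := by
              nlinarith [mul_nonneg h2k.le (mul_nonneg hB0 hI0)]
    rw [Real.rpow_neg h1abs.le, ← div_eq_mul_inv, le_div_iff₀ hpow_pos]
    exact hmain

lemma testfn_vertical (ha : 0 < a) (hab : a ≤ b) {M m : ℝ} (hM : 1/2 < M) (hm : 2 ≤ m)
    (hg : TestFn a b g) : Complex.VerticalIntegrable (mellin g) (1/2) := by
  obtain ⟨-, C, hC, hbound⟩ := testfn_memX hM hm ha hab hg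
  have hcont : Continuous fun y : ℝ => mellin g (((1/2 : ℝ) : ℂ) + y * Complex.I) := by
    rw [continuous_iff_continuousAt]
    intro y
    exact (testfn_mellin_differentiableAt ha hg _).continuousAt.comp
      (by fun_prop)
  refine (integrable_inv_one_add_sq.const_mul C).mono' hcont.aestronglyMeasurable ?_
  filter_upwards with y
  set z : ℂ := ((1/2 : ℝ) : ℂ) + y * Complex.I with hzdef
  have hre : z.re = 1/2 := by simp [hzdef]
  have him : z.im = y := by simp [hzdef]
  have hz : |z.re| < M := by rw [hre]; rw [abs_of_pos (by norm_num)]; exact hM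
  have h1 := hbound z hz
  have habsy : |y| ≤ ‖z‖ := by
    rw [← him]; exact Complex.abs_im_le_norm z
  have hy0 : (0:ℝ) ≤ |y| := abs_nonneg y
  have hchain : (1 + y ^ 2) ≤ (1 + ‖z‖) ^ m := by
    calc (1 + y ^ 2) ≤ (1 + |y|) ^ (2:ℕ) := by nlinarith [_root_.sq_abs y]
      _ = (1 + |y|) ^ (2:ℝ) := (Real.rpow_natCast _ 2).symm
      _ ≤ (1 + |y|) ^ m := Real.rpow_le_rpow_of_exponent_le (by linarith) hm
      _ ≤ (1 + ‖z‖) ^ m :=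
          Real.rpow_le_rpow (by linarith) (by linarith) (by linarith)
  have hpos : (0:ℝ) < 1 + y ^ 2 := by positivity
  show ‖mellin g z‖ ≤ C * (1 + y ^ 2)⁻¹
  calc ‖mellin g z‖ ≤ C * (1 + ‖z‖) ^ (-m) := h1
    _ ≤ C * (1 + y ^ 2)⁻¹ := by
        rw [Real.rpow_neg (by positivity)]
        refine mul_le_mul_of_nonneg_left ?_ hC.le
        exact inv_anti₀ hpos hchain

lemma testfn_inversion (ha : 0 < a) (hab : a ≤ b) {M m : ℝ} (hM : 1/2 < M) (hm : 2 ≤ m)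
    (hg : TestFn a b g) {x : ℝ} (hx : 0 < x) :
    mellinInv (1/2) (mellin g) x = g x :=
  mellinInv_mellin_eq (1/2) g hx (testfn_mellin_integrable ha hg _)
    (testfn_vertical ha hab hM hm hg) hg.cont.continuousAt

lemma mellinInvC_eq_mellinInv (c : ℝ) (φ : ℂ → ℂ) (x : ℝ) :
    mellinInvC c φ x = mellinInv c φ x := by
  rw [mellinInvC, mellinInv, Complex.real_smul]
  congr 1
  · push_cast; ring
  · refine integral_congr_ae (Eventually.of_forall fun y => ?_)
    show (x:ℂ) ^ (-(c:ℂ) - Complex.I * y) * φ ((c:ℂ) + Complex.I * y)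
        = (x:ℂ) ^ (-((c:ℂ) + (y:ℂ) * Complex.I)) • φ ((c:ℂ) + (y:ℂ) * Complex.I)
    rw [smul_eq_mul]
    have e1 : -(c:ℂ) - Complex.I * y = -((c:ℂ) + (y:ℂ) * Complex.I) := by ring
    have e2 : (c:ℂ) + Complex.I * y = (c:ℂ) + (y:ℂ) * Complex.I := by ring
    rw [e1, e2]

end MellinFL

theorem mellin_fundamental_lemma (M m : ℝ) (hM : 1/2 < M) (hm : 2 ≤ m)
    (u : ℝ → ℂ) (hu : LocallyIntegrableOn u (Set.Ioi 0))
    (hint : ∀ φ : ℂ → ℂ, memX M m φ →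
      IntegrableOn (fun x => u x * mellinInvC (1/2) φ x) (Set.Ioi 0))
    (hzero : ∀ φ : ℂ → ℂ, memX M m φ →
      ∫ x in Set.Ioi (0 : ℝ), u x * mellinInvC (1/2) φ x = 0) :
    ∀ᵐ x ∂(volume.restrict (Set.Ioi (0 : ℝ))), u x = 0 := by
  rw [ae_restrict_iff' measurableSet_Ioi]
  apply isOpen_Ioi.ae_eq_zero_of_integral_contDiff_smul_eq_zero hu
  intro g g_diff g_supp g_sub
  by_cases hK : tsupport g = ∅
  · have hg0 : g = 0 := by
      funext x
      exact image_eq_zero_of_notMem_tsupport (by simp [hK])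
    rw [hg0]; simp
  · have hKne : (tsupport g).Nonempty := Set.nonempty_iff_ne_empty.mpr hK
    have hKcomp : IsCompact (tsupport g) := g_supp
    set a := sInf (tsupport g) with hadef
    set b := sSup (tsupport g) with hbdef
    have haK : a ∈ tsupport g := hKcomp.sInf_mem hKne
    have hbK : b ∈ tsupport g := hKcomp.sSup_mem hKne
    have ha : 0 < a := g_sub haK
    have hsub : tsupport g ⊆ Set.Icc a b := fun x hx =>
      ⟨csInf_le hKcomp.bddBelow hx, le_csSup hKcomp.bddAbove hx⟩
    have hab : a ≤ b := (hsub haK).2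
    set gc : ℝ → ℂ := fun x => (g x : ℂ) with hgc
    have hgcT : MellinFL.TestFn a b gc := by
      constructor
      · exact Complex.ofRealCLM.contDiff.comp g_diff
      · have hss : Function.support gc = Function.support g := by
          ext x; simp [hgc, Function.mem_support]
        rw [tsupport, hss]
        exact hsub
    have hmemX := MellinFL.testfn_memX hM hm ha hab hgcT
    have hz := hzero (mellin gc) hmemX
    have hinv : ∀ x ∈ Set.Ioi (0 : ℝ),
        u x * mellinInvC (1/2) (mellin gc) x = u x * gc x := by
      intro x hx
      rw [MellinFL.mellinInvC_eq_mellinInv,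
        MellinFL.testfn_inversion ha hab hM hm hgcT hx]
    have hz2 : ∫ x in Set.Ioi (0 : ℝ), u x * gc x = 0 := by
      rw [← hz]
      exact (setIntegral_congr_fun measurableSet_Ioi hinv).symm
    have hfull : (∫ x, g x • u x) = ∫ x in Set.Ioi (0 : ℝ), g x • u x :=
      (setIntegral_eq_integral_of_forall_compl_eq_zero (fun x hx => by
        have hgx : g x = 0 := image_eq_zero_of_notMem_tsupport (fun hc => hx (g_sub hc))
        simp [hgx])).symm
    rw [hfull, ← hz2]
    refine setIntegral_congr_fun measurableSet_Ioi fun x hx => ?_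
    show g x • u x = u x * gc x
    rw [Complex.real_smul]
    exact mul_comm _ _
end

section
/- Let M, m > 0 and let F₀ ⊂ S_M be a finite set. For every β ∈ F₀ let k(β) ∈ ℕ ∪ {0} and let A_{β,l} ∈ ℂ be given for every 0 ≤ l ≤ k(β). Then there exists ψ ∈ X_{M,m} such that ψ^{(l)}(β) = A_{β,l} for every β ∈ F₀ and every 0 ≤ l ≤ k(β), where ψ^{(l)} denotes the l-th complex derivative. -/
open Polynomial


noncomputable def gExp : ℂ → ℂ := fun z => Complex.exp (z ^ 2)

lemma gExp_diff : Differentiable ℂ gExp :=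
  Complex.differentiable_exp.comp (differentiable_pow 2)

lemma iteratedDeriv_add' {f g : ℂ → ℂ} (hf : Differentiable ℂ f) (hg : Differentiable ℂ g)
    (n : ℕ) (x : ℂ) :
    iteratedDeriv n (f + g) x = iteratedDeriv n f x + iteratedDeriv n g x := by
  simp only [← iteratedDerivWithin_univ]
  exact iteratedDerivWithin_add (Set.mem_univ x) uniqueDiffOn_univ
    hf.contDiff.contDiffWithinAt hg.contDiff.contDiffWithinAt

lemma iteratedDeriv_csmul {f : ℂ → ℂ} (hf : Differentiable ℂ f) (c : ℂ) (n : ℕ) (x : ℂ) :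
    iteratedDeriv n (c • f) x = c • iteratedDeriv n f x := by
  simp only [← iteratedDerivWithin_univ]
  exact iteratedDerivWithin_const_smul (Set.mem_univ x) uniqueDiffOn_univ c
    hf.contDiff.contDiffWithinAt

lemma iteratedDeriv_polyEval (n : ℕ) (p : ℂ[X]) (x : ℂ) :
    iteratedDeriv n (fun z => p.eval z) x = (derivative^[n] p).eval x := by
  induction n generalizing p x with
  | zero => simp
  | succ n ih =>
    rw [iteratedDeriv_succ']
    have : deriv (fun z => p.eval z) = fun z => (derivative p).eval z := by
      funext z; exact Polynomial.deriv (p := p)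
    rw [this, ih, Function.iterate_succ_apply]

lemma jets_mul_zero {β : ℂ} : ∀ (n : ℕ) (f h : ℂ → ℂ), Differentiable ℂ f → Differentiable ℂ h →
    (∀ j ≤ n, iteratedDeriv j f β = 0) → ∀ j ≤ n, iteratedDeriv j (fun z => f z * h z) β = 0 := by
  intro n
  induction n with
  | zero =>
    intro f h hf hh hjets j hj
    interval_cases j
    simpa using mul_eq_zero_of_left (by simpa using hjets 0 le_rfl) (h β)
  | succ n ih =>
    intro f h hf hh hjets j hj
    rcases Nat.eq_zero_or_pos j with rfl | hp
    · simpa using mul_eq_zero_of_left (by simpa using hjets 0 (Nat.zero_le _)) (h β)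
    obtain ⟨i, rfl⟩ := Nat.exists_eq_succ_of_ne_zero hp.ne'
    have hi : i ≤ n := Nat.succ_le_succ_iff.mp hj
    have hderiv : deriv (fun z => f z * h z) =
        (fun z => deriv f z * h z) + fun z => f z * deriv h z := by
      funext z
      simpa using deriv_fun_mul (hf.differentiableAt) (hh.differentiableAt)
    have hdf : Differentiable ℂ (deriv f) :=
      ((contDiff_infty_iff_deriv.mp hf.contDiff).2).differentiable (by simp)
    have hdh : Differentiable ℂ (deriv h) :=
      ((contDiff_infty_iff_deriv.mp hh.contDiff).2).differentiable (by simp)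
    rw [iteratedDeriv_succ', hderiv, iteratedDeriv_add' (hdf.fun_mul hh) (hf.fun_mul hdh)]
    have t1 : iteratedDeriv i (fun z => deriv f z * h z) β = 0 := by
      refine ih (deriv f) h hdf hh (fun j hjn => ?_) i hi
      rw [← iteratedDeriv_succ']
      exact hjets (j+1) (Nat.succ_le_succ hjn)
    have t2 : iteratedDeriv i (fun z => f z * deriv h z) β = 0 :=
      ih f (deriv h) hf hdh (fun j hjn => hjets j (hjn.trans (Nat.le_succ n))) i hi
    rw [t1, t2, add_zero]

lemma poly_eq_zero_of_jets (F₀ : Finset ℂ) (k : ℂ → ℕ) (p : ℂ[X])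
    (hdeg : p ∈ degreeLT ℂ (∑ β ∈ F₀, (k β + 1)))
    (hjets : ∀ β ∈ F₀, ∀ l ≤ k β, iteratedDeriv l (fun z => p.eval z * gExp z) β = 0) :
    p = 0 := by
  by_contra hp
  -- jets of the bare polynomial vanish
  have hpj : ∀ β ∈ F₀, ∀ l ≤ k β, iteratedDeriv l (fun z => p.eval z) β = 0 := by
    intro β hβ l hl
    have hfun : (fun z : ℂ => p.eval z) =
        fun z => (p.eval z * gExp z) * Complex.exp (-(z ^ 2)) := by
      funext z
      rw [mul_assoc, gExp, ← Complex.exp_add, add_neg_cancel, Complex.exp_zero, mul_one]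
    rw [hfun]
    exact jets_mul_zero (k β) (fun z => p.eval z * gExp z)
      (fun z => Complex.exp (-(z ^ 2)))
      ((p.differentiable).mul gExp_diff)
      (Complex.differentiable_exp.comp ((differentiable_pow 2).neg))
      (hjets β hβ) l hl
  -- hence high root multiplicity
  have hdvd : ∀ β ∈ F₀, (X - C β) ^ (k β + 1) ∣ p := by
    intro β hβ
    have hroot : ∀ l ≤ k β, (derivative^[l] p).IsRoot β := by
      intro l hl
      have := hpj β hβ l hl
      rwa [iteratedDeriv_polyEval] at this
    have hlt : k β < p.rootMultiplicity β :=
      Polynomial.lt_rootMultiplicity_of_isRoot_iterate_derivative hp hroot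
    exact dvd_trans (pow_dvd_pow _ hlt) (Polynomial.pow_rootMultiplicity_dvd p β)
  have hQdvd : (∏ β ∈ F₀, (X - C β) ^ (k β + 1)) ∣ p := by
    refine Finset.prod_dvd_of_coprime (fun a ha b hb hab => ?_) (fun β hβ => hdvd β hβ)
    exact (Polynomial.pairwise_coprime_X_sub_C (Function.injective_id) hab).pow
  have hQdeg : (∏ β ∈ F₀, (X - C β) ^ (k β + 1)).natDegree = ∑ β ∈ F₀, (k β + 1) := by
    rw [Polynomial.natDegree_prod]
    · exact Finset.sum_congr rfl fun β _ => by
        rw [Polynomial.natDegree_pow, Polynomial.natDegree_X_sub_C, mul_one]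
    · intro β _
      exact pow_ne_zero _ (Polynomial.X_sub_C_ne_zero β)
  have h1 : ((∑ β ∈ F₀, (k β + 1) : ℕ) : WithBot ℕ) ≤ p.degree := by
    have := Polynomial.degree_le_of_dvd hQdvd hp
    rwa [Polynomial.degree_eq_natDegree (by
      exact Finset.prod_ne_zero_iff.mpr fun β _ => pow_ne_zero _ (Polynomial.X_sub_C_ne_zero β)),
      hQdeg] at this
  have h2 := Polynomial.mem_degreeLT.mp hdeg
  exact absurd (lt_of_le_of_lt h1 h2) (lt_irrefl _)

lemma exists_poly_jets (F₀ : Finset ℂ) (k : ℂ → ℕ) (A : ℂ → ℕ → ℂ) :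
    ∃ p : ℂ[X], ∀ β ∈ F₀, ∀ l ≤ k β,
      iteratedDeriv l (fun z => p.eval z * gExp z) β = A β l := by
  classical
  set D := ∑ β ∈ F₀, (k β + 1) with hD
  let ι := (β : F₀) × Fin (k β.1 + 1)
  have hcard : Fintype.card ι = D := by
    rw [Fintype.card_sigma]
    simp only [Fintype.card_fin]
    exact Finset.sum_coe_sort F₀ (fun β => k β + 1)
  have hdiffmul : ∀ q : ℂ[X], Differentiable ℂ (fun z => q.eval z * gExp z) :=
    fun q => (q.differentiable).mul gExp_diff
  let T : degreeLT ℂ D →ₗ[ℂ] (ι → ℂ) :=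
    { toFun := fun p i => iteratedDeriv i.2 (fun z => (p : ℂ[X]).eval z * gExp z) i.1
      map_add' := by
        intro p q
        funext i
        have hfun : (fun z => ((p : ℂ[X]) + (q : ℂ[X])).eval z * gExp z) =
            (fun z => (p : ℂ[X]).eval z * gExp z) + fun z => (q : ℂ[X]).eval z * gExp z := by
          funext z; simp [add_mul]
        simp only [Submodule.coe_add, Pi.add_apply]
        rw [hfun, iteratedDeriv_add' (hdiffmul _) (hdiffmul _)]
      map_smul' := by
        intro c p
        funext i
        have hfun : (fun z => ((c • (p : ℂ[X])).eval z * gExp z)) =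
            c • fun z => (p : ℂ[X]).eval z * gExp z := by
          funext z; simp [Polynomial.eval_smul]; ring
        simp only [Submodule.coe_smul, RingHom.id_apply, Pi.smul_apply]
        rw [hfun, iteratedDeriv_csmul (hdiffmul _), smul_eq_mul]
    }
  haveI : FiniteDimensional ℂ (degreeLT ℂ D) :=
    LinearEquiv.finiteDimensional (Polynomial.degreeLTEquiv ℂ D).symm
  have hfr : Module.finrank ℂ (degreeLT ℂ D) = Module.finrank ℂ (ι → ℂ) := by
    rw [(Polynomial.degreeLTEquiv ℂ D).finrank_eq, Module.finrank_pi, Module.finrank_pi, hcard,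
      Fintype.card_fin]
  have hinj : Function.Injective T := by
    rw [← LinearMap.ker_eq_bot, LinearMap.ker_eq_bot']
    intro p hp
    have : (p : ℂ[X]) = 0 := by
      refine poly_eq_zero_of_jets F₀ k p p.2 (fun β hβ l hl => ?_)
      have := congrFun hp ⟨⟨β, hβ⟩, ⟨l, Nat.lt_succ_of_le hl⟩⟩
      exact this
    exact Subtype.ext this
  have hsurj : Function.Surjective T :=
    (LinearMap.injective_iff_surjective_of_finrank_eq_finrank hfr).mp hinj
  obtain ⟨p, hTp⟩ := hsurj (fun i => A i.1.1 i.2)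
  refine ⟨p, fun β hβ l hl => ?_⟩
  have := congrFun hTp ⟨⟨β, hβ⟩, ⟨l, Nat.lt_succ_of_le hl⟩⟩
  exact this

set_option maxHeartbeats 1000000 in
theorem exists_memX_prescribed_derivs (M m : ℝ) (hM : 0 < M) (hm : 0 < m)
    (F₀ : Finset ℂ) (hF₀ : ∀ β ∈ F₀, |β.re| < M)
    (k : ℂ → ℕ) (A : ℂ → ℕ → ℂ) :
    ∃ ψ : ℂ → ℂ, memX M m ψ ∧
      ∀ β ∈ F₀, ∀ l ≤ k β, iteratedDeriv l ψ β = A β l := by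
  obtain ⟨p, hp⟩ := exists_poly_jets F₀ k A
  refine ⟨fun z => p.eval z * gExp z, ⟨?_, ?_⟩, fun β hβ l hl => hp β hβ l hl⟩
  · exact ((p.differentiable).mul gExp_diff).differentiableOn
  · set d := p.natDegree with hd
    set B : ℝ := (∑ i ∈ Finset.range (d + 1), ‖p.coeff i‖) + 1 with hB
    have hBpos : 0 < B := by
      rw [hB]
      have : 0 ≤ ∑ i ∈ Finset.range (d + 1), ‖p.coeff i‖ :=
        Finset.sum_nonneg fun i _ => norm_nonneg _
      linarith
    obtain ⟨K, hK⟩ : ∃ K : ℝ, K = d + m := ⟨_, rfl⟩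
    have hKpos : 0 < K := by rw [hK]; positivity
    obtain ⟨C, hC⟩ : ∃ C : ℝ, C = B * (1 + M) ^ K * Real.exp (M ^ 2 + K ^ 2 / 4) := ⟨_, rfl⟩
    have hCpos : 0 < C := by rw [hC]; positivity
    refine ⟨C, hCpos, fun z hz => ?_⟩
    obtain ⟨a, ha⟩ : ∃ a, a = ‖z‖ := ⟨_, rfl⟩
    have ha0 : 0 ≤ a := ha ▸ norm_nonneg z
    have h1a : (1 : ℝ) ≤ 1 + a := by linarith
    -- polynomial bound
    have hpoly : ‖p.eval z‖ ≤ B * (1 + a) ^ d := by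
      rw [Polynomial.eval_eq_sum_range, hB, ← hd]
      refine (norm_sum_le _ _).trans ?_
      have : ∀ i ∈ Finset.range (d + 1), ‖p.coeff i * z ^ i‖ ≤ ‖p.coeff i‖ * (1 + a) ^ d := by
        intro i hi
        rw [norm_mul, norm_pow]
        refine mul_le_mul_of_nonneg_left ?_ (norm_nonneg _)
        calc ‖z‖ ^ i ≤ (1 + a) ^ i := by
              refine pow_le_pow_left₀ (norm_nonneg _) ?_ i
              simpa [ha] using (by linarith : a ≤ 1 + a)
          _ ≤ (1 + a) ^ d := pow_le_pow_right₀ h1a (Nat.lt_succ_iff.mp (Finset.mem_range.mp hi))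
      refine (Finset.sum_le_sum this).trans ?_
      rw [← Finset.sum_mul]
      refine mul_le_mul_of_nonneg_right ?_ (by positivity)
      linarith
    -- exponential bound
    have hexp : ‖gExp z‖ = Real.exp (z.re ^ 2 - z.im ^ 2) := by
      rw [gExp, Complex.norm_exp]
      congr 1
      rw [pow_two, Complex.mul_re]
      ring
    have hre2 : z.re ^ 2 ≤ M ^ 2 := by
      have := abs_le.mp (le_of_lt hz)
      nlinarith
    -- main estimate
    have h1apos : (0:ℝ) < 1 + a := by linarith
    have hmpos : (0:ℝ) < (1 + a) ^ m := Real.rpow_pos_of_pos h1apos m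
    rw [← ha, Real.rpow_neg h1apos.le, ← div_eq_mul_inv, le_div_iff₀ hmpos]
    have hnorm : ‖eval z p * gExp z‖ ≤ B * (1 + a) ^ d * Real.exp (M ^ 2 - z.im ^ 2) := by
      rw [norm_mul, hexp]
      exact mul_le_mul hpoly (Real.exp_le_exp.mpr (by linarith)) (Real.exp_pos _).le
        (mul_nonneg hBpos.le (pow_nonneg (by linarith) d))
    have haM : 1 + a ≤ (1 + M) * Real.exp |z.im| := by
      have h1 : a ≤ M + |z.im| := by
        have h2 := Complex.norm_le_abs_re_add_abs_im z
        have h3 := le_of_lt hz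
        rw [ha]
        have h4 := abs_le.mp h3
        linarith [abs_le.mp h3]
      have h2 : |z.im| + 1 ≤ Real.exp |z.im| := Real.add_one_le_exp _
      nlinarith [abs_nonneg z.im, (Real.exp_pos |z.im|).le]
    have hKb : (1 + a) ^ K ≤ (1 + M) ^ K * Real.exp (|z.im| * K) := by
      calc (1 + a) ^ K ≤ ((1 + M) * Real.exp |z.im|) ^ K :=
            Real.rpow_le_rpow h1apos.le haM hKpos.le
        _ = (1 + M) ^ K * Real.exp (|z.im| * K) := by
            rw [Real.mul_rpow (by linarith) (Real.exp_pos _).le, Real.exp_mul]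
    calc ‖eval z p * gExp z‖ * (1 + a) ^ m
        ≤ B * (1 + a) ^ d * Real.exp (M ^ 2 - z.im ^ 2) * (1 + a) ^ m :=
          mul_le_mul_of_nonneg_right hnorm hmpos.le
      _ = B * Real.exp (M ^ 2 - z.im ^ 2) * (1 + a) ^ K := by
          rw [hK, Real.rpow_add h1apos, Real.rpow_natCast]; ring
      _ ≤ B * Real.exp (M ^ 2 - z.im ^ 2) * ((1 + M) ^ K * Real.exp (|z.im| * K)) := by
          refine mul_le_mul_of_nonneg_left hKb (by positivity)
      _ = B * (1 + M) ^ K * Real.exp (M ^ 2 - z.im ^ 2 + |z.im| * K) := by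
          rw [Real.exp_add]; ring
      _ ≤ C := by
          rw [hC]
          have hkey : M ^ 2 - z.im ^ 2 + |z.im| * K ≤ M ^ 2 + K ^ 2 / 4 := by
            nlinarith [sq_nonneg (|z.im| - K / 2), sq_abs z.im]
          have h5 : (0:ℝ) ≤ B * (1 + M) ^ K :=
            mul_nonneg hBpos.le (Real.rpow_nonneg (by linarith) K)
          exact mul_le_mul_of_nonneg_left (Real.exp_le_exp.mpr hkey) h5
end

section
/- Let s ∈ (0,1). For every β ∈ ℂ such that β − 2s is not an integer and β is not a negative integer, the following identity of values of the Gamma function holds: [Γ(β+1)/Γ(β−2s+1)] · [sin(π(β−s))/sin(π(β−2s))] − 2 s² 4^s [Γ(s+1/2)/Γ(1−s)] π^{−1/2} (Γ(2s−β) Γ(β+1)/Γ(1+2s))² = [Γ(β+1) sin(πs)/(Γ(β−2s+1) sin(π(β−2s)))] · ( sin(π(β−s))/sin(πs) + Γ(2s−β) Γ(β+1)/Γ(2s) ). -/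
/-!
STATEMENT 12: For s ∈ (0,1) and β ∈ ℂ with β − 2s not an integer and β not a negative
integer, the two expressions for the Mellin symbol `f` of the Neumann operator coincide:
Γ(β+1)/Γ(β−2s+1) · sin(π(β−s))/sin(π(β−2s))
  − 2 s² 4^s (Γ(s+1/2)/Γ(1−s)) π^{−1/2} (Γ(2s−β) Γ(β+1)/Γ(1+2s))²
= [Γ(β+1) sin(πs)/(Γ(β−2s+1) sin(π(β−2s)))] · ( sin(π(β−s))/sin(πs) + Γ(2s−β) Γ(β+1)/Γ(2s) ).
-/

open Complex

theorem gamma_identity_for_f (s : ℝ) (hs : s ∈ Set.Ioo (0:ℝ) 1) (β : ℂ)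
    (h1 : ∀ n : ℤ, β - 2 * s ≠ (n : ℂ))
    (h2 : ∀ n : ℤ, n < 0 → β ≠ (n : ℂ)) :
    Complex.Gamma (β + 1) / Complex.Gamma (β - 2 * s + 1) *
        (Complex.sin (Real.pi * (β - s)) / Complex.sin (Real.pi * (β - 2 * s))) -
      2 * (s : ℂ) ^ 2 * ((4 : ℝ) ^ s : ℝ) *
        (Complex.Gamma (s + 1 / 2) / Complex.Gamma (1 - s)) *
        ((Real.pi ^ (-(1 : ℝ) / 2) : ℝ) : ℂ) *
        (Complex.Gamma (2 * s - β) * Complex.Gamma (β + 1) / Complex.Gamma (1 + 2 * s)) ^ 2 =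
    Complex.Gamma (β + 1) * Complex.sin (Real.pi * s) /
        (Complex.Gamma (β - 2 * s + 1) * Complex.sin (Real.pi * (β - 2 * s))) *
      (Complex.sin (Real.pi * (β - s)) / Complex.sin (Real.pi * s) +
        Complex.Gamma (2 * s - β) * Complex.Gamma (β + 1) / Complex.Gamma (2 * s)) := by
  obtain ⟨hs0, hs1⟩ := hs
  have hπR : (0:ℝ) < Real.pi := Real.pi_pos
  have hπ : (Real.pi : ℂ) ≠ 0 := ofReal_ne_zero.2 Real.pi_ne_zero
  have hsc : (s : ℂ) ≠ 0 := ofReal_ne_zero.2 (ne_of_gt hs0)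
  -- Gamma values at positive real arguments are nonzero
  have hΓ2s : Complex.Gamma (2 * (s:ℂ)) ≠ 0 := by
    apply Complex.Gamma_ne_zero_of_re_pos
    rw [show (2 * (s:ℂ)) = ((2*s : ℝ) : ℂ) by push_cast; ring, ofReal_re]
    linarith
  have hΓs : Complex.Gamma ((s:ℂ)) ≠ 0 := by
    apply Complex.Gamma_ne_zero_of_re_pos
    rw [ofReal_re]; linarith
  have hΓr : Complex.Gamma (2 * (s:ℂ) - β) ≠ 0 := by
    apply Complex.Gamma_ne_zero
    intro m hm
    apply h1 m
    push_cast
    linear_combination -hm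
  -- sines nonzero
  have hsinS : Complex.sin ((Real.pi:ℂ) * (s:ℂ)) ≠ 0 := by
    rw [Complex.sin_ne_zero_iff]
    intro k h
    have hk : (s:ℂ) = (k:ℂ) :=
      mul_left_cancel₀ hπ (by rw [h]; ring)
    have hk' : s = (k:ℝ) := by exact_mod_cast hk
    have h0 : (0:ℝ) < (k:ℝ) := hk' ▸ hs0
    have h1' : ((k:ℝ)) < 1 := hk' ▸ hs1
    have : (0:ℤ) < k := by exact_mod_cast h0
    have : k < (1:ℤ) := by exact_mod_cast h1'
    omega
  have hsinB : Complex.sin ((Real.pi:ℂ) * (β - 2 * s)) ≠ 0 := by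
    rw [Complex.sin_ne_zero_iff]
    intro k h
    apply h1 k
    have : (Real.pi:ℂ) * (β - 2*s) = (Real.pi:ℂ) * (k:ℂ) := by rw [h]; ring
    exact mul_left_cancel₀ hπ this
  -- reflection formula for Γ(β-2s+1)
  have e1 : Complex.Gamma (β - 2 * s + 1) =
      -(Real.pi:ℂ) / (Complex.sin ((Real.pi:ℂ) * (β - 2*s)) * Complex.Gamma (2 * (s:ℂ) - β)) := by
    have h := Complex.Gamma_mul_Gamma_one_sub (2 * (s:ℂ) - β)
    rw [show (1:ℂ) - (2 * (s:ℂ) - β) = β - 2 * s + 1 by ring,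
      show ((Real.pi:ℂ) * (2 * (s:ℂ) - β)) = -((Real.pi:ℂ) * (β - 2*s)) by ring,
      Complex.sin_neg, eq_div_iff (neg_ne_zero.2 hsinB)] at h
    rw [eq_div_iff (mul_ne_zero hsinB hΓr)]
    linear_combination -h
  -- reflection formula for Γ(1-s)
  have e2 : Complex.Gamma (1 - (s:ℂ)) =
      (Real.pi:ℂ) / (Complex.sin ((Real.pi:ℂ) * (s:ℂ)) * Complex.Gamma ((s:ℂ))) := by
    have h := Complex.Gamma_mul_Gamma_one_sub ((s:ℂ))
    rw [eq_div_iff hsinS] at h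
    rw [eq_div_iff (mul_ne_zero hsinS hΓs)]
    linear_combination h
  -- duplication formula
  have e3 : Complex.Gamma ((s:ℂ) + 1/2) =
      Complex.Gamma (2 * (s:ℂ)) * (2:ℂ) ^ ((1:ℂ) - 2 * s) * (Real.sqrt Real.pi : ℂ)
        / Complex.Gamma ((s:ℂ)) := by
    have h := Complex.Gamma_mul_Gamma_add_half ((s:ℂ))
    rw [eq_div_iff hΓs]
    linear_combination h
  -- Γ(1+2s) = 2s Γ(2s)
  have e4 : Complex.Gamma (1 + 2 * (s:ℂ)) = 2 * s * Complex.Gamma (2 * (s:ℂ)) := by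
    rw [show (1 + 2 * (s:ℂ)) = 2 * (s:ℂ) + 1 by ring, Complex.Gamma_add_one _ (by
      simpa using hsc)]
  -- power facts
  have hA : (((4:ℝ) ^ s : ℝ) : ℂ) ≠ 0 := by
    exact_mod_cast ne_of_gt (Real.rpow_pos_of_pos (by norm_num) s)
  have hC : ((Real.pi ^ (-(1:ℝ)/2) : ℝ) : ℂ) ≠ 0 := by
    exact_mod_cast ne_of_gt (Real.rpow_pos_of_pos hπR _)
  have hB : (2:ℂ) ^ ((1:ℂ) - 2 * s) = 2 / (((4:ℝ) ^ s : ℝ) : ℂ) := by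
    have h4 : (((4:ℝ) ^ s : ℝ) : ℂ) = (2:ℂ) ^ (2 * (s:ℂ)) := by
      rw [show (4:ℝ) = (2:ℝ) ^ (2:ℝ) by
          rw [show (2:ℝ) = ((2:ℕ):ℝ) by norm_num]
          rw [Real.rpow_natCast]; norm_num,
        ← Real.rpow_mul (by norm_num : (0:ℝ) ≤ 2),
        Complex.ofReal_cpow (by norm_num : (0:ℝ) ≤ 2)]
      push_cast
      ring_nf
    rw [eq_div_iff hA, h4, ← Complex.cpow_add _ _ (by norm_num : (2:ℂ) ≠ 0),
      show ((1:ℂ) - 2 * s) + 2 * (s:ℂ) = 1 by ring, Complex.cpow_one]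
  have hD : ((Real.sqrt Real.pi : ℝ) : ℂ) = 1 / ((Real.pi ^ (-(1:ℝ)/2) : ℝ) : ℂ) := by
    rw [eq_div_iff hC]
    have : Real.sqrt Real.pi * Real.pi ^ (-(1:ℝ)/2) = 1 := by
      rw [Real.sqrt_eq_rpow, ← Real.rpow_add hπR]
      norm_num
    exact_mod_cast this
  have cAll : ((Real.pi : ℂ) * ((s:ℂ)) ^ 2 * (((4:ℝ) ^ s : ℝ) : ℂ) *
        (Complex.Gamma (2 * (s:ℂ))) ^ 2 * Complex.Gamma ((s:ℂ)) *
        ((Real.pi ^ (-(1:ℝ)/2) : ℝ) : ℂ)) *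
      (((Real.pi : ℂ))⁻¹ * (((s:ℂ))⁻¹) ^ 2 * ((((4:ℝ) ^ s : ℝ) : ℂ))⁻¹ *
        ((Complex.Gamma (2 * (s:ℂ)))⁻¹) ^ 2 * (Complex.Gamma ((s:ℂ)))⁻¹ *
        (((Real.pi ^ (-(1:ℝ)/2) : ℝ) : ℂ))⁻¹) = 1 := by
    calc ((Real.pi : ℂ) * ((s:ℂ)) ^ 2 * (((4:ℝ) ^ s : ℝ) : ℂ) *
        (Complex.Gamma (2 * (s:ℂ))) ^ 2 * Complex.Gamma ((s:ℂ)) *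
        ((Real.pi ^ (-(1:ℝ)/2) : ℝ) : ℂ)) *
      (((Real.pi : ℂ))⁻¹ * (((s:ℂ))⁻¹) ^ 2 * ((((4:ℝ) ^ s : ℝ) : ℂ))⁻¹ *
        ((Complex.Gamma (2 * (s:ℂ)))⁻¹) ^ 2 * (Complex.Gamma ((s:ℂ)))⁻¹ *
        (((Real.pi ^ (-(1:ℝ)/2) : ℝ) : ℂ))⁻¹)
        = ((Real.pi : ℂ) * ((Real.pi : ℂ))⁻¹) * (((s:ℂ) * ((s:ℂ))⁻¹) ^ 2) *
          ((((4:ℝ) ^ s : ℝ) : ℂ) * ((((4:ℝ) ^ s : ℝ) : ℂ))⁻¹) *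
          ((Complex.Gamma (2 * (s:ℂ)) * (Complex.Gamma (2 * (s:ℂ)))⁻¹) ^ 2) *
          (Complex.Gamma ((s:ℂ)) * (Complex.Gamma ((s:ℂ)))⁻¹) *
          (((Real.pi ^ (-(1:ℝ)/2) : ℝ) : ℂ) * (((Real.pi ^ (-(1:ℝ)/2) : ℝ) : ℂ))⁻¹) := by
            ring
      _ = 1 := by
        rw [mul_inv_cancel₀ hπ, mul_inv_cancel₀ hsc, mul_inv_cancel₀ hA,
          mul_inv_cancel₀ hΓ2s, mul_inv_cancel₀ hΓs, mul_inv_cancel₀ hC]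
        norm_num
  rw [e1, e2, e3, e4, hB, hD]
  field_simp [hπ, hsc, hΓ2s, hΓs, hΓr, hsinS, hsinB, hA, hC]
  ring
end

section
/- Let Ω ⊂ ℂ be a bounded, open, simply connected set whose boundary ∂Ω is of Lipschitz class, and let g be a holomorphic function on a neighborhood of the closure of Ω. Assume there exist constants c₁, c₂ > 0 such that Im(g(z)) ≥ min{0, c₁ − c₂ |Re(g(z))|} for every z ∈ ∂Ω. Then g(z) ≠ 0 for every z ∈ Ω, unless g vanishes identically. -/
/-!
STATEMENT 18: Let Ω ⊂ ℂ be bounded, open, simply connected with Lipschitz boundary, and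
let g be holomorphic on a neighborhood of the closure of Ω. If
Im(g(z)) ≥ min{0, c₁ − c₂ |Re(g(z))|} for every z ∈ ∂Ω (for some c₁, c₂ > 0), then
g has no zeros in Ω, unless g vanishes identically (on Ω).
-/

open Real Set

noncomputable def psiAux (β : ℝ) (ζ : ℂ) : ℝ :=
  ‖ζ‖ ^ β * Real.cos (max (-(π/2)) (min (π/2) (β * Complex.arg ζ)))

lemma psiAux_nonneg (β : ℝ) (ζ : ℂ) : 0 ≤ psiAux β ζ := by
  apply mul_nonneg (Real.rpow_nonneg (norm_nonneg ζ) β)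
  apply Real.cos_nonneg_of_mem_Icc
  constructor
  · exact le_max_left _ _
  · apply max_le (by linarith [Real.pi_pos]) (min_le_left _ _)

lemma psiAux_zero_of_big (β : ℝ) (ζ : ℂ) (h : π/2 ≤ |β * Complex.arg ζ|) :
    psiAux β ζ = 0 := by
  have hπ : (0:ℝ) < π/2 := by positivity
  rcases le_or_gt 0 (β * Complex.arg ζ) with ht | ht
  · rw [abs_of_nonneg ht] at h
    have : min (π/2) (β * Complex.arg ζ) = π/2 := min_eq_left h
    rw [psiAux, this, max_eq_right (by linarith), Real.cos_pi_div_two, mul_zero]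
  · rw [abs_of_neg ht] at h
    have h1 : β * Complex.arg ζ ≤ -(π/2) := by linarith
    have : min (π/2) (β * Complex.arg ζ) = β * Complex.arg ζ := min_eq_right (by linarith)
    rw [psiAux, this, max_eq_left h1, Real.cos_neg, Real.cos_pi_div_two, mul_zero]

lemma psiAux_zero (β c₁ c₂ : ℝ) (hβ : 2 ≤ β) (hc₁ : 0 < c₁) (hc₂ : 0 < c₂)
    (hθ : π/(2*β) ≤ Real.arctan (1/c₂)) (ζ : ℂ)
    (h : ζ.re ≤ max 0 (c₂ * |ζ.im| - c₁)) : psiAux β ζ = 0 := by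
  have hβ0 : (0:ℝ) < β := by linarith
  by_cases hζ : ζ = 0
  · simp [psiAux, hζ, Real.zero_rpow (by linarith : β ≠ 0)]
  rcases le_or_gt ζ.re 0 with hre | hre
  · -- |arg| ≥ π/2
    have harg : π/2 ≤ |Complex.arg ζ| := by
      by_contra hcon
      push_neg at hcon
      rcases Complex.abs_arg_lt_pi_div_two_iff.mp hcon with h1 | h1
      · linarith
      · exact hζ h1
    apply psiAux_zero_of_big
    rw [abs_mul, abs_of_pos hβ0]
    nlinarith [Real.pi_pos]
  · -- re > 0 case
    have himr : c₂ * |ζ.im| - c₁ ≥ ζ.re := by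
      rcases le_max_iff.mp h with h1 | h1
      · linarith
      · linarith
    have him : |ζ.im| / ζ.re > 1/c₂ := by
      rw [gt_iff_lt, div_lt_div_iff₀ hc₂ hre]
      nlinarith
    have hargeq : Complex.arg ζ = Real.arctan (ζ.im / ζ.re) := by
      have habs : |Complex.arg ζ| < π/2 :=
        Complex.abs_arg_lt_pi_div_two_iff.mpr (Or.inl hre)
      rw [← Complex.tan_arg ζ, Real.arctan_tan (by linarith [abs_lt.mp habs])
        (by linarith [abs_lt.mp habs])]
    have hargabs : |Complex.arg ζ| = Real.arctan (|ζ.im| / ζ.re) := by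
      rw [hargeq]
      rcases le_or_gt 0 ζ.im with h2 | h2
      · have hx : 0 ≤ ζ.im / ζ.re := by positivity
        have h4 : 0 ≤ Real.arctan (ζ.im / ζ.re) := by
          have := Real.arctan_strictMono.monotone hx
          rwa [Real.arctan_zero] at this
        rw [abs_of_nonneg h2, abs_of_nonneg h4]
      · have hx : ζ.im / ζ.re < 0 := div_neg_of_neg_of_pos h2 hre
        have h4 : Real.arctan (ζ.im / ζ.re) < 0 := by
          have := Real.arctan_strictMono hx
          rwa [Real.arctan_zero] at this
        rw [abs_of_neg h4, abs_of_neg h2, neg_div, Real.arctan_neg]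
    have hlt : Real.arctan (1/c₂) < |Complex.arg ζ| := by
      rw [hargabs]
      exact Real.arctan_strictMono him
    apply psiAux_zero_of_big
    rw [abs_mul, abs_of_pos hβ0]
    have h3 : π/(2*β) < |Complex.arg ζ| := lt_of_le_of_lt hθ hlt
    rw [div_lt_iff₀ (by linarith)] at h3
    linarith [h3]

lemma psiAux_pos (β x : ℝ) (hx : 0 < x) : 0 < psiAux β ((x:ℝ) : ℂ) := by
  have h1 : Complex.arg ((x:ℝ) : ℂ) = 0 := Complex.arg_ofReal_of_nonneg hx.le
  have h2 : ‖((x:ℝ) : ℂ)‖ = x := by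
    rw [Complex.norm_real, Real.norm_eq_abs, abs_of_pos hx]
  have hπ : (0:ℝ) < π/2 := by positivity
  rw [psiAux, h1, h2, mul_zero, min_eq_right hπ.le, max_eq_right (by linarith),
    Real.cos_zero, mul_one]
  exact Real.rpow_pos_of_pos hx β

lemma psiAux_eq_re (β : ℝ) (hβ : 2 ≤ β) (ζ : ℂ) (h : 0 < psiAux β ζ) :
    0 < ζ.re ∧ ((ζ : ℂ) ^ (β:ℂ)).re = psiAux β ζ := by
  have hβ0 : (0:ℝ) < β := by linarith
  have hζ : ζ ≠ 0 := by
    rintro rfl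
    simp [psiAux, Real.zero_rpow (by linarith : β ≠ 0)] at h
  have hsmall : |β * Complex.arg ζ| < π/2 := by
    by_contra hcon
    push_neg at hcon
    rw [psiAux_zero_of_big β ζ hcon] at h
    exact lt_irrefl 0 h
  have hre : 0 < ζ.re := by
    have haa : |Complex.arg ζ| < π/2 := by
      rw [abs_mul, abs_of_pos hβ0] at hsmall
      nlinarith [abs_nonneg (Complex.arg ζ)]
    rcases Complex.abs_arg_lt_pi_div_two_iff.mp haa with h1 | h1
    · exact h1
    · exact absurd h1 hζ
  refine ⟨hre, ?_⟩
  have hclamp : max (-(π/2)) (min (π/2) (β * Complex.arg ζ)) = β * Complex.arg ζ := by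
    rcases abs_lt.mp hsmall with ⟨h1, h2⟩
    rw [min_eq_right h2.le, max_eq_right h1.le]
  rw [Complex.cpow_def_of_ne_zero hζ, Complex.exp_re]
  have hrelog : (Complex.log ζ * (β:ℂ)).re = β * Real.log ‖ζ‖ := by
    simp [Complex.mul_re, Complex.log_re, mul_comm]
  have himlog : (Complex.log ζ * (β:ℂ)).im = β * Complex.arg ζ := by
    simp [Complex.mul_im, Complex.log_im, mul_comm]
  rw [hrelog, himlog, psiAux, hclamp]
  congr 1
  rw [Real.rpow_def_of_pos (norm_pos_iff.mpr hζ), mul_comm]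

lemma psiAux_zero_of_re_nonpos (β : ℝ) (hβ : 2 ≤ β) (ζ : ℂ) (h : ζ.re ≤ 0) :
    psiAux β ζ = 0 := by
  have hβ0 : (0:ℝ) < β := by linarith
  by_cases hζ : ζ = 0
  · simp [psiAux, hζ, Real.zero_rpow (by linarith : β ≠ 0)]
  have harg : π/2 ≤ |Complex.arg ζ| := by
    by_contra hcon
    push_neg at hcon
    rcases Complex.abs_arg_lt_pi_div_two_iff.mp hcon with h1 | h1
    · linarith
    · exact hζ h1
  apply psiAux_zero_of_big
  rw [abs_mul, abs_of_pos hβ0]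
  nlinarith [Real.pi_pos]

lemma psiAux_continuous (β : ℝ) (hβ : 2 ≤ β) : Continuous (psiAux β) := by
  have hβ0 : (0:ℝ) < β := by linarith
  rw [continuous_iff_continuousAt]
  intro ζ
  have hA : Continuous fun ζ : ℂ => ‖ζ‖ ^ β :=
    continuous_norm.rpow_const (fun _ => Or.inr hβ0.le)
  by_cases hζ : ζ = 0
  · subst hζ
    have h0 : psiAux β 0 = 0 := by
      simp [psiAux, Real.zero_rpow (by linarith : β ≠ 0)]
    rw [ContinuousAt, h0]
    apply squeeze_zero (g := fun ζ : ℂ => ‖ζ‖ ^ β)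
    · exact fun x => psiAux_nonneg β x
    · intro x
      rw [psiAux]
      calc ‖x‖ ^ β * Real.cos _ ≤ ‖x‖ ^ β * 1 := by
            apply mul_le_mul_of_nonneg_left (Real.cos_le_one _)
              (Real.rpow_nonneg (norm_nonneg x) β)
        _ = ‖x‖ ^ β := mul_one _
    · have := hA.continuousAt (x := (0:ℂ))
      rw [ContinuousAt] at this
      simpa [Real.zero_rpow (by linarith : β ≠ 0)] using this
  by_cases hsp : ζ ∈ Complex.slitPlane
  · have harg : ContinuousAt Complex.arg ζ := Complex.continuousAt_arg hsp
    exact (hA.continuousAt).mul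
      (Real.continuous_cos.continuousAt.comp
        ((continuousAt_const.max (continuousAt_const.min (continuousAt_const.mul harg)))))
  · -- re < 0
    have hre : ζ.re < 0 := by
      rcases lt_trichotomy ζ.re 0 with h | h | h
      · exact h
      · exfalso
        apply hsp
        rw [Complex.mem_slitPlane_iff]
        right
        intro him
        exact hζ (Complex.ext h him)
      · exact absurd (Or.inl h) hsp
    have hev : ∀ᶠ w in nhds ζ, psiAux β w = 0 := by
      have hopen : IsOpen {w : ℂ | w.re < 0} := isOpen_lt Complex.continuous_re continuous_const
      filter_upwards [hopen.mem_nhds hre] with w hw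
      exact psiAux_zero_of_re_nonpos β hβ w (le_of_lt hw)
    exact continuousAt_const.congr (by filter_upwards [hev] with w hw; rw [hw])
/-- `Ω ⊂ ℂ` has boundary of Lipschitz class: near every boundary point, in suitable
orthonormal coordinates (obtained by rotating by a unit complex number `e`), `Ω`
coincides with the region above the graph of a Lipschitz function. -/
def HasLipschitzBoundary (Ω : Set ℂ) : Prop :=
  ∀ z ∈ frontier Ω, ∃ (e : ℂ) (r : ℝ) (L : NNReal) (ψ : ℝ → ℝ),
    ‖e‖ = 1 ∧ 0 < r ∧ LipschitzWith L ψ ∧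
    ∀ w ∈ Metric.ball z r, (w ∈ Ω ↔ ψ ((e⁻¹ * (w - z)).re) < (e⁻¹ * (w - z)).im)

theorem no_zeros_of_boundary_imaginary_bound
    (Ω : Set ℂ) (hΩ_open : IsOpen Ω) (hΩ_bdd : Bornology.IsBounded Ω)
    (hΩ_sc : SimplyConnectedSpace Ω) (hΩ_lip : HasLipschitzBoundary Ω)
    (g : ℂ → ℂ)
    (hg : ∃ U : Set ℂ, IsOpen U ∧ closure Ω ⊆ U ∧ DifferentiableOn ℂ g U)
    (c₁ c₂ : ℝ) (hc₁ : 0 < c₁) (hc₂ : 0 < c₂)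
    (hbd : ∀ z ∈ frontier Ω, min 0 (c₁ - c₂ * |(g z).re|) ≤ (g z).im) :
    (∀ z ∈ Ω, g z = 0) ∨ ∀ z ∈ Ω, g z ≠ 0 := by
  obtain ⟨U, hUo, hUc, hgd⟩ := hg
  have hΩU : Ω ⊆ U := subset_closure.trans hUc
  have hθpos : 0 < Real.arctan (1/c₂) := by
    have := Real.arctan_strictMono (show (0:ℝ) < 1/c₂ by positivity)
    rwa [Real.arctan_zero] at this
  set θ := Real.arctan (1/c₂) with hθdef
  set β := max 2 (π/(2*θ)) with hβdef
  have hβ2 : 2 ≤ β := le_max_left _ _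
  have hβ0 : (0:ℝ) < β := by linarith
  have hβθ : π/(2*β) ≤ θ := by
    rw [div_le_iff₀ (by linarith)]
    have h1 : π/(2*θ) ≤ β := le_max_right _ _
    rw [div_le_iff₀ (by positivity)] at h1
    nlinarith
  set v : ℂ → ℝ := fun z => psiAux β (Complex.I * g z) with hv
  have hclos : IsCompact (closure Ω) :=
    Metric.isCompact_of_isClosed_isBounded isClosed_closure hΩ_bdd.closure
  have hvU : ContinuousOn v U :=
    (psiAux_continuous β hβ2).comp_continuousOn
      (continuousOn_const.mul hgd.continuousOn)
  -- frontier values vanish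
  have hfr : ∀ z ∈ frontier Ω, v z = 0 := by
    intro z hz
    apply psiAux_zero β c₁ c₂ hβ2 hc₁ hc₂ hβθ
    have h1 := hbd z hz
    have h2 : (Complex.I * g z).re = -(g z).im := by
      simp [Complex.mul_re]
    have h3 : (Complex.I * g z).im = (g z).re := by
      simp [Complex.mul_im]
    rw [h2, h3]
    rcases min_cases (0:ℝ) (c₁ - c₂ * |(g z).re|) with ⟨he, _⟩ | ⟨he, _⟩ <;>
      [skip; skip] <;>
    · rw [he] at h1
      rcases le_max_iff (a := (0:ℝ)) (b := c₂ * |(g z).re| - c₁) (c := -(g z).im) with ⟨_, h5⟩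
      apply le_max_iff.mpr
      first
        | exact Or.inl (by linarith)
        | exact Or.inr (by linarith)
  -- main estimate: v ≤ 0 on the closure
  have vle : ∀ z ∈ closure Ω, v z ≤ 0 := by
    by_contra hcon
    push_neg at hcon
    obtain ⟨z₁, hz₁, hvz₁⟩ := hcon
    obtain ⟨zs, hzsmem, hmax⟩ := hclos.exists_isMaxOn ⟨z₁, hz₁⟩ (hvU.mono hUc)
    set M := v zs with hM
    have hMpos : 0 < M := lt_of_lt_of_le hvz₁ (hmax hz₁)
    set A := {z | z ∈ closure Ω ∧ v z = M} with hA
    have hAsub : ∀ a ∈ A, a ∈ Ω := by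
      rintro a ⟨ha1, ha2⟩
      by_contra haΩ
      have : a ∈ frontier Ω := by
        rw [hΩ_open.frontier_eq]
        exact ⟨ha1, haΩ⟩
      rw [hfr a this] at ha2
      exact absurd ha2.symm (ne_of_gt hMpos)
    -- the set N of good points
    set N : Set ℂ := Ω ∩ (U ∩ v ⁻¹' Set.Ioi 0) with hN
    have hNopen : IsOpen N :=
      hΩ_open.inter (hvU.isOpen_inter_preimage hUo isOpen_Ioi)
    have hNsub : N ⊆ Ω := Set.inter_subset_left
    set H : ℂ → ℂ := fun w => Complex.exp ((Complex.I * g w) ^ (β:ℂ)) with hH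
    have hnormH : ∀ w ∈ N, ‖H w‖ = Real.exp (v w) := by
      intro w hw
      rw [hH]
      simp only []
      rw [Complex.norm_exp, (psiAux_eq_re β hβ2 _ hw.2.2).2]
    have hAopen : IsOpen A := by
      rw [isOpen_iff_mem_nhds]
      intro a ha
      have haΩ := hAsub a ha
      have haN : a ∈ N := ⟨haΩ, hΩU haΩ, by
        simp only [Set.mem_preimage, Set.mem_Ioi]
        rw [ha.2]; exact hMpos⟩
      have hev : ∀ᶠ y in nhds a, y ∈ N := hNopen.mem_nhds haN
      have hdiff : ∀ᶠ y in nhds a, DifferentiableAt ℂ H y := by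
        filter_upwards [hev] with w hw
        have hgw : DifferentiableAt ℂ g w := hgd.differentiableAt (hUo.mem_nhds hw.2.1)
        have hre : 0 < (Complex.I * g w).re := (psiAux_eq_re β hβ2 _ hw.2.2).1
        exact (((differentiableAt_const _).mul hgw).cpow (differentiableAt_const _)
          (Or.inl hre)).cexp
      have hloc : IsLocalMax (norm ∘ H) a := by
        filter_upwards [hev] with y hy
        simp only [Function.comp_apply]
        rw [hnormH y hy, hnormH a haN, ha.2]
        exact Real.exp_le_exp.mpr (hmax (subset_closure (hNsub hy)))
      have heq := Complex.eventually_eq_of_isLocalMax_norm hdiff hloc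
      have : ∀ᶠ y in nhds a, y ∈ A := by
        filter_upwards [heq, hev] with y hy1 hy2
        refine ⟨subset_closure (hNsub hy2), ?_⟩
        have h6 : ‖H y‖ = ‖H a‖ := by rw [hy1]
        rw [hnormH y hy2, hnormH a haN, ha.2] at h6
        exact Real.exp_injective h6
      exact Filter.eventually_mem_set.mp this
    have hAclosed : IsClosed A := by
      have : A = closure Ω ∩ v ⁻¹' {M} := by
        ext w; simp [hA, Set.mem_inter_iff]
      rw [this]
      exact (hvU.mono hUc).preimage_isClosed_of_isClosed isClosed_closure isClosed_singleton
    rcases isClopen_iff.mp ⟨hAclosed, hAopen⟩ with hAe | hAu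
    · have hzsA : zs ∈ A := ⟨hzsmem, rfl⟩
      rw [hAe] at hzsA
      exact absurd hzsA (Set.notMem_empty zs)
    · obtain ⟨ρ, hρ⟩ := hΩ_bdd.closure.subset_ball 0
      have hw : ((|ρ| + 1 : ℝ) : ℂ) ∈ A := hAu ▸ Set.mem_univ _
      have := hρ hw.1
      rw [Metric.mem_ball] at this
      simp only [Complex.dist_eq, sub_zero] at this
      rw [Complex.norm_real] at this
      have : |(|ρ| + 1)| < ρ := this
      rw [abs_of_pos (by positivity)] at this
      linarith [abs_nonneg ρ, le_abs_self ρ]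
  -- now the dichotomy
  have han : AnalyticOnNhd ℂ g Ω := (hgd.analyticOnNhd hUo).mono hΩU
  have hpcs : PathConnectedSpace Ω := inferInstance
  have hpc : IsPreconnected Ω :=
    (isPathConnected_iff_pathConnectedSpace.mpr hpcs).isConnected.isPreconnected
  rcases han.is_constant_or_isOpen hpc with ⟨w, hw⟩ | hopen
  · by_cases hw0 : w = 0
    · exact Or.inl fun z hz => by rw [hw z hz, hw0]
    · exact Or.inr fun z hz => by rw [hw z hz]; exact hw0
  · right
    intro z hz hz0
    have himg : IsOpen (g '' Ω) := hopen Ω subset_rfl hΩ_open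
    have h0 : (0:ℂ) ∈ g '' Ω := ⟨z, hz, hz0⟩
    obtain ⟨δ, hδ, hball⟩ := Metric.isOpen_iff.mp himg 0 h0
    have hwmem : (-(↑(δ/2)) * Complex.I : ℂ) ∈ Metric.ball (0:ℂ) δ := by
      rw [Metric.mem_ball, Complex.dist_eq, sub_zero]
      rw [norm_mul, Complex.norm_I, mul_one, norm_neg, Complex.norm_real, Real.norm_eq_abs]
      rw [abs_of_pos (by linarith)]
      linarith
    obtain ⟨z₂, hz₂, hgz₂⟩ := hball hwmem
    have hvz₂ : v z₂ = psiAux β ((↑(δ/2) : ℂ)) := by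
      rw [hv]
      simp only []
      congr 1
      rw [hgz₂]
      ring_nf
      rw [Complex.I_sq]
      ring
    have hpos := psiAux_pos β (δ/2) (by linarith)
    have := vle z₂ (subset_closure hz₂)
    rw [hvz₂] at this
    linarith
end
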